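/- arXiv:1608.03137 — 10 statements merged into one kernel-verified Lean document; each statement's English description precedes it below -/
import Mathlib

section
/- Let p be a prime, G a profinite group, and H an open normal subgroup of G such that: (a) for every h ∈ H and every open subgroup U of H there exists n ≥ 0 with h^(p^n) ∈ U; and (b) for all g, h ∈ H and all n ≥ 0, g^(p^n) = h^(p^n) implies g = h. Then every element x ∈ G whose centralizer C_G(x) is open in G commutes with every element of H. In particular, if H = G, then the FC-centre Δ(G) equals the centre Z(G). -/
/-- Let `G` be a profinite group and `H` an open normal subgroup such that
(a) every element of `H` has `p`-power torsion modulo every open subgroup of `H`, and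
(b) `H` has unique `p`-power roots. Then every element of `G` with open centralizer
commutes with every element of `H`; in particular if `H = G` then the FC-centre of `G`
equals the centre of `G`. -/
theorem fc_centre_eq_centre {p : ℕ} (hp : p.Prime) {G : Type*} [Group G]
    [TopologicalSpace G] [IsTopologicalGroup G] [CompactSpace G] [T2Space G]
    [TotallyDisconnectedSpace G]
    (H : Subgroup G) [H.Normal] (hHopen : IsOpen (H : Set G))
    (ha : ∀ h : H, ∀ U : Subgroup H, IsOpen (U : Set H) → ∃ n : ℕ, h ^ p ^ n ∈ U)
    (hb : ∀ g h : H, ∀ n : ℕ, g ^ p ^ n = h ^ p ^ n → g = h) :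
    (∀ x : G, IsOpen ((Subgroup.centralizer {x} : Subgroup G) : Set G) →
      ∀ h ∈ H, Commute x h) ∧
    (H = ⊤ →
      {x : G | IsOpen ((Subgroup.centralizer {x} : Subgroup G) : Set G)} =
        (Subgroup.center G : Set G)) := by
  have main : ∀ x : G, IsOpen ((Subgroup.centralizer {x} : Subgroup G) : Set G) →
      ∀ h ∈ H, Commute x h := by
    intro x hx h hhH
    set C : Subgroup G := Subgroup.centralizer {x}
    set U : Subgroup H := C.comap H.subtype
    have hUopen : IsOpen (U : Set H) := by
      have : (U : Set H) = Subtype.val ⁻¹' (C : Set G) := rfl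
      rw [this]
      exact hx.preimage continuous_subtype_val
    obtain ⟨n, hn⟩ := ha ⟨h, hhH⟩ U hUopen
    have hcomm : Commute x (h ^ p ^ n) := by
      have : (⟨h, hhH⟩ : H) ^ p ^ n ∈ U := hn
      have h2 : (h : G) ^ p ^ n ∈ C := this
      exact Subgroup.mem_centralizer_iff.mp h2 x (Set.mem_singleton x)
    have hg : x * h * x⁻¹ ∈ H := Subgroup.Normal.conj_mem ‹H.Normal› h hhH x
    have key : (⟨x * h * x⁻¹, hg⟩ : H) ^ p ^ n = (⟨h, hhH⟩ : H) ^ p ^ n := by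
      ext
      rw [SubmonoidClass.coe_pow, SubmonoidClass.coe_pow]
      show (x * h * x⁻¹) ^ p ^ n = h ^ p ^ n
      rw [conj_pow, hcomm.eq, mul_assoc, mul_inv_cancel, mul_one]
    have := hb _ _ n key
    have : x * h * x⁻¹ = h := congrArg Subtype.val this
    have : x * h = h * x := by
      have := congrArg (· * x) this
      simpa [mul_assoc] using this
    exact this
  refine ⟨main, ?_⟩
  intro hH
  ext x
  simp only [Set.mem_setOf_eq, SetLike.mem_coe]
  constructor
  · intro hx
    rw [Subgroup.mem_center_iff]
    intro g
    exact (main x hx g (hH ▸ Subgroup.mem_top g)).symm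
  · intro hx
    have : (Subgroup.centralizer {x} : Subgroup G) = ⊤ := by
      rw [eq_top_iff]
      intro g _
      rw [Subgroup.mem_centralizer_iff]
      intro y hy
      rw [Set.mem_singleton_iff] at hy
      subst hy
      exact (Subgroup.mem_center_iff.mp hx g).symm
    rw [this]
    exact isOpen_univ
end

section
/- Let G be a profinite group, N a closed normal subgroup of G, and H a closed subgroup of G containing N. Then the image H/N is an orbital closed subgroup of the quotient topological group G/N if and only if H is an orbital closed subgroup of G; and H/N is an isolated orbital closed subgroup of G/N if and only if H is an isolated orbital closed subgroup of G. -/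
/-- A closed subgroup `H` of a topological group `G` is *orbital* if it is closed and
its normalizer is open in `G`. -/
def IsOrbital {G : Type*} [Group G] [TopologicalSpace G] (H : Subgroup G) : Prop :=
  IsClosed (H : Set G) ∧ IsOpen (Subgroup.normalizer (H : Set G) : Set G)

/-- An orbital closed subgroup `H` is *isolated orbital* if every orbital closed subgroup
properly containing `H` contains it with infinite index. -/
def IsIsolatedOrbital {G : Type*} [Group G] [TopologicalSpace G] (H : Subgroup G) : Prop :=
  IsOrbital H ∧ ∀ H' : Subgroup G, IsOrbital H' → H < H' → H.relIndex H' = 0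

/-- `G` satisfies the maximum condition on closed subgroups. -/
def MaxClosedSubgroups (G : Type*) [Group G] [TopologicalSpace G] : Prop :=
  ∀ S : Set (Subgroup G), S.Nonempty → (∀ H ∈ S, IsClosed (H : Set G)) →
    ∃ M ∈ S, ∀ K ∈ S, M ≤ K → K = M

/-- A topological group is *orbitally sound* if every isolated orbital closed subgroup
is normal. -/
def OrbitallySound (G : Type*) [Group G] [TopologicalSpace G] : Prop :=
  ∀ H : Subgroup G, IsIsolatedOrbital H → H.Normal

/-- The *isolator* of an orbital closed subgroup `H`: the closed subgroup topologically
generated by all orbital closed subgroups `L` containing `H` with finite index. -/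
def isolator {G : Type*} [Group G] [TopologicalSpace G] [IsTopologicalGroup G]
    (H : Subgroup G) : Subgroup G :=
  (⨆ L ∈ {L : Subgroup G | IsOrbital L ∧ H ≤ L ∧ H.relIndex L ≠ 0}, L).topologicalClosure

/-- The Roseblade subgroup `nio(G)`: the intersection of the normalizers of all isolated
orbital closed subgroups of `G`. -/
def nio (G : Type*) [Group G] [TopologicalSpace G] : Subgroup G :=
  ⨅ H ∈ {H : Subgroup G | IsIsolatedOrbital H}, Subgroup.normalizer (H : Set G)

open Topology

section Aux
variable {G : Type*} [Group G] [TopologicalSpace G] [IsTopologicalGroup G]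
  (N : Subgroup G) [N.Normal]

lemma aux_qm : IsQuotientMap (QuotientGroup.mk' N) := isQuotientMap_quotient_mk'

lemma aux_comap_map (K : Subgroup G) (hNK : N ≤ K) :
    (K.map (QuotientGroup.mk' N)).comap (QuotientGroup.mk' N) = K := by
  rw [Subgroup.comap_map_eq, QuotientGroup.ker_mk', sup_of_le_left hNK]

lemma aux_preimage (K : Subgroup G) (hNK : N ≤ K) :
    (QuotientGroup.mk' N) ⁻¹' ((K.map (QuotientGroup.mk' N)) : Set (G ⧸ N)) = (K : Set G) := by
  conv_rhs => rw [← aux_comap_map N K hNK]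
  rfl

lemma aux_closed (K : Subgroup G) (hNK : N ≤ K) :
    IsClosed ((K.map (QuotientGroup.mk' N)) : Set (G ⧸ N)) ↔ IsClosed (K : Set G) := by
  rw [← (aux_qm N).isClosed_preimage, aux_preimage N K hNK]

lemma aux_norm_comap (K' : Subgroup (G ⧸ N)) :
    (Subgroup.normalizer (K' : Set (G ⧸ N))).comap (QuotientGroup.mk' N) =
      Subgroup.normalizer ((K'.comap (QuotientGroup.mk' N) : Subgroup G) : Set G) :=
  Subgroup.comap_normalizer_eq_of_surjective K' (QuotientGroup.mk'_surjective N)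

lemma aux_norm (K : Subgroup G) (hNK : N ≤ K) :
    (Subgroup.normalizer ((K.map (QuotientGroup.mk' N) : Subgroup (G ⧸ N)) : Set (G ⧸ N))).comap
      (QuotientGroup.mk' N) = Subgroup.normalizer (K : Set G) := by
  rw [aux_norm_comap, aux_comap_map N K hNK]

lemma aux_norm_open (K : Subgroup G) (hNK : N ≤ K) :
    IsOpen (Subgroup.normalizer ((K.map (QuotientGroup.mk' N) : Subgroup (G ⧸ N)) : Set (G ⧸ N))
        : Set (G ⧸ N)) ↔
        IsOpen (Subgroup.normalizer (K : Set G) : Set G) := by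
  rw [← (aux_qm N).isOpen_preimage]
  have key : (QuotientGroup.mk' N) ⁻¹' (Subgroup.normalizer ((K.map (QuotientGroup.mk' N) : Subgroup (G ⧸ N)) : Set (G ⧸ N))
        : Set (G ⧸ N)) = (Subgroup.normalizer (K : Set G) : Set G) := by
    rw [← aux_norm N K hNK]; rfl
  rw [key]

lemma aux_orbital (K : Subgroup G) (hNK : N ≤ K) :
    IsOrbital (K.map (QuotientGroup.mk' N)) ↔ IsOrbital K := by
  unfold IsOrbital
  rw [aux_closed N K hNK, aux_norm_open N K hNK]

lemma aux_relindex (K K' : Subgroup G) (hNK : N ≤ K) :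
    (K.map (QuotientGroup.mk' N)).relIndex (K'.map (QuotientGroup.mk' N))
      = K.relIndex K' := by
  rw [← Subgroup.relIndex_comap, aux_comap_map N K hNK]

end Aux

/-- Let `G` be a profinite group, `N` a closed normal subgroup and `H` a closed subgroup
containing `N`. Then `H/N` is orbital in `G/N` iff `H` is orbital in `G`, and `H/N` is
isolated orbital in `G/N` iff `H` is isolated orbital in `G`. -/
theorem orbital_quotient_iff {G : Type*} [Group G] [TopologicalSpace G]
    [IsTopologicalGroup G] [CompactSpace G] [T2Space G] [TotallyDisconnectedSpace G]
    (N : Subgroup G) [N.Normal] (hNcl : IsClosed (N : Set G))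
    (H : Subgroup G) (hHcl : IsClosed (H : Set G)) (hNH : N ≤ H) :
    (IsOrbital (H.map (QuotientGroup.mk' N)) ↔ IsOrbital H) ∧
    (IsIsolatedOrbital (H.map (QuotientGroup.mk' N)) ↔ IsIsolatedOrbital H) := by
  have horb := aux_orbital N H hNH
  refine ⟨horb, ?_⟩
  constructor
  · rintro ⟨h1, h2⟩
    refine ⟨horb.mp h1, fun H' hH' hlt => ?_⟩
    have hNH' : N ≤ H' := hNH.trans hlt.le
    have hmaplt : H.map (QuotientGroup.mk' N) < H'.map (QuotientGroup.mk' N) := by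
      refine lt_of_le_of_ne (Subgroup.map_mono hlt.le) fun he => ?_
      have h3 := congrArg (Subgroup.comap (QuotientGroup.mk' N)) he
      rw [aux_comap_map N H hNH, aux_comap_map N H' hNH'] at h3
      exact hlt.ne h3
    have h4 := h2 (H'.map (QuotientGroup.mk' N)) ((aux_orbital N H' hNH').mpr hH') hmaplt
    rwa [aux_relindex N H H' hNH] at h4
  · rintro ⟨h1, h2⟩
    refine ⟨horb.mpr h1, fun K' hK' hlt => ?_⟩
    set H' := K'.comap (QuotientGroup.mk' N) with hH'
    have hmap : H'.map (QuotientGroup.mk' N) = K' :=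
      Subgroup.map_comap_eq_self_of_surjective (QuotientGroup.mk'_surjective N) K'
    have hHle : H < H' := by
      refine lt_of_le_of_ne ?_ fun he => ?_
      · rw [← aux_comap_map N H hNH]; exact Subgroup.comap_mono hlt.le
      · rw [← he] at hmap; exact hlt.ne hmap
    have hH'orb : IsOrbital H' := by
      refine ⟨hK'.1.preimage continuous_quotient_mk', ?_⟩
      have h5 : IsOpen (((Subgroup.normalizer (K' : Set (G ⧸ N))).comap (QuotientGroup.mk' N) : Subgroup G)
          : Set G) :=
        hK'.2.preimage continuous_quotient_mk'
      rwa [aux_norm_comap N K'] at h5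
    have h6 := h2 H' hH'orb hHle
    rw [← hmap, aux_relindex N H H' hNH, h6]
end

section
/- Let G be a profinite group that is orbitally sound, and let N be a closed normal subgroup of G. Then the quotient topological group G/N is orbitally sound, i.e., every isolated orbital closed subgroup of G/N is normal in G/N. -/
/-- If a profinite group `G` is orbitally sound and `N` is a closed normal subgroup,
then the quotient `G/N` is orbitally sound. -/
theorem orbitallySound_quotient {G : Type*} [Group G] [TopologicalSpace G]
    [IsTopologicalGroup G] [CompactSpace G] [T2Space G] [TotallyDisconnectedSpace G]
    (hG : OrbitallySound G)
    (N : Subgroup G) [N.Normal] (hNcl : IsClosed (N : Set G)) :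
    OrbitallySound (G ⧸ N) := by
  haveI : IsClosed (N : Set G) := hNcl
  intro Hbar hHbar
  set π : G →* G ⧸ N := QuotientGroup.mk' N with hπ
  have hπsurj : Function.Surjective π := QuotientGroup.mk'_surjective N
  have hπcont : Continuous π := continuous_quotient_mk'
  set H : Subgroup G := Hbar.comap π with hH
  have hNleH : N ≤ H := fun n hn => by
    show π n ∈ Hbar
    have : π n = 1 := (QuotientGroup.eq_one_iff n).mpr hn
    rw [this]; exact Hbar.one_mem
  have hmapH : H.map π = Hbar := Subgroup.map_comap_eq_self_of_surjective hπsurj _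
  -- H is orbital
  have hHclosed : IsClosed (H : Set G) := hHbar.1.1.preimage hπcont
  have hHnorm_open : IsOpen (Subgroup.normalizer (H : Set G) : Set G) := by
    have hle : (Subgroup.normalizer (Hbar : Set (G ⧸ N))).comap π ≤ Subgroup.normalizer (H : Set G) := by
      rw [Subgroup.comap_normalizer_eq_of_surjective Hbar hπsurj]
    exact Subgroup.isOpen_mono hle (hHbar.1.2.preimage hπcont)
  -- H is isolated orbital
  have hHiso : IsIsolatedOrbital H := by
    refine ⟨⟨hHclosed, hHnorm_open⟩, fun H' hH' hlt => ?_⟩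
    by_contra hrel
    have hNleH' : N ≤ H' := le_trans hNleH hlt.le
    have hcomapmap : (H'.map π).comap π = H' := by
      rw [Subgroup.comap_map_eq, QuotientGroup.ker_mk', sup_eq_left.mpr hNleH']
    -- map π H' is orbital
    have hmapclosed : IsClosed ((H'.map π : Subgroup (G ⧸ N)) : Set (G ⧸ N)) := by
      have : IsCompact ((H' : Set G)) := hH'.1.isCompact
      have : IsCompact (π '' (H' : Set G)) := this.image hπcont
      exact this.isClosed
    have hmapnorm : IsOpen ((Subgroup.normalizer ((H'.map π : Subgroup (G ⧸ N)) : Set (G ⧸ N)) : Subgroup (G ⧸ N)) : Set (G ⧸ N)) := by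
      have hle : (Subgroup.normalizer (H' : Set G)).map π ≤ Subgroup.normalizer ((H'.map π : Subgroup (G ⧸ N)) : Set (G ⧸ N)) := by
        rintro _ ⟨g, hg, rfl⟩
        rw [Subgroup.mem_normalizer_iff]
        intro h
        constructor
        · rintro ⟨x, hx, rfl⟩
          exact ⟨g * x * g⁻¹, (Subgroup.mem_normalizer_iff.mp hg x).mp hx, by
            simp [mul_assoc]⟩
        · rintro hmem
          obtain ⟨y, hy, hy2⟩ := hmem
          refine ⟨g⁻¹ * y * g, ?_, ?_⟩
          · have := (Subgroup.mem_normalizer_iff.mp (Subgroup.inv_mem _ hg) y).mp hy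
            simpa [mul_assoc] using this
          · have : π (g⁻¹ * y * g) = (π g)⁻¹ * π y * π g := by
              simp [mul_assoc]
            rw [this, hy2]; group
      refine Subgroup.isOpen_mono hle ?_
      exact QuotientGroup.isOpenMap_coe _ hH'.2
    have hltbar : Hbar < H'.map π := by
      rw [← hmapH]
      constructor
      · exact Subgroup.map_mono hlt.le
      · intro hge
        have h1 : H' ≤ (H.map π).comap π := hcomapmap ▸ Subgroup.comap_mono hge
        have h2 : (H.map π).comap π = H := by
          rw [Subgroup.comap_map_eq, QuotientGroup.ker_mk', sup_eq_left.mpr hNleH]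
        exact hlt.not_ge (h2 ▸ h1)
    have := hHbar.2 (H'.map π) ⟨hmapclosed, hmapnorm⟩ hltbar
    refine hrel ?_
    rw [hH, Subgroup.relIndex_comap]
    exact this
  -- conclude
  have hHnormal : H.Normal := hG H hHiso
  rw [← hmapH]
  exact Subgroup.Normal.map hHnormal π hπsurj
end

section
/- Let G be a profinite group and N a finite normal subgroup of G. If the quotient topological group G/N is orbitally sound, then G is orbitally sound, i.e., every isolated orbital closed subgroup of G is normal in G. -/
section aux
open Pointwise
variable {G : Type*} [Group G]

/-- normalizer of H is contained in normalizer of H ⊔ N when N normal -/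
lemma normalizer_le_normalizer_sup (H N : Subgroup G) [hN : N.Normal] :
    Subgroup.normalizer (H : Set G) ≤ Subgroup.normalizer ((H ⊔ N : Subgroup G) : Set G) := by
  intro g hg
  rw [Subgroup.mem_normalizer_iff] at hg ⊢
  intro x
  constructor
  · intro hx
    have hx' : x ∈ (H : Set G) * (N : Set G) := by rwa [← Subgroup.mul_normal]
    obtain ⟨h, hh, n, hn, rfl⟩ := hx'
    have : g * (h * n) * g⁻¹ = (g * h * g⁻¹) * (g * n * g⁻¹) := by group
    rw [this]
    exact mul_mem (Subgroup.mem_sup_left ((hg h).mp hh)) (Subgroup.mem_sup_right (hN.conj_mem n hn g))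
  · intro hx
    have hx' : g * x * g⁻¹ ∈ (H : Set G) * (N : Set G) := by rwa [← Subgroup.mul_normal]
    obtain ⟨h, hh, n, hn, heq⟩ := hx'
    have hxe : x = (g⁻¹ * h * g) * (g⁻¹ * n * g) := by
      have : x = g⁻¹ * (g * x * g⁻¹) * g := by group
      rw [this, ← heq]; group
    rw [hxe]
    have h1 : g⁻¹ * h * g ∈ H := by
      have := (hg (g⁻¹ * h * g)).mpr
      apply this
      have : g * (g⁻¹ * h * g) * g⁻¹ = h := by group
      rwa [this]
    exact mul_mem (Subgroup.mem_sup_left h1) (Subgroup.mem_sup_right (hN.conj_mem' n hn g))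

lemma relindex_sup_ne_zero (H N : Subgroup G) [hN : N.Normal] (hNfin : (N : Set G).Finite) :
    H.relIndex (H ⊔ N) ≠ 0 := by
  have : Finite ((H ⊔ N : Subgroup G) ⧸ H.subgroupOf (H ⊔ N)) := by
    haveI : Finite (N : Set G) := hNfin
    apply Finite.of_surjective
      (fun n : (N : Set G) => QuotientGroup.mk (⟨n.1, Subgroup.mem_sup_right n.2⟩ : (H ⊔ N : Subgroup G)))
    intro q
    obtain ⟨x, rfl⟩ := QuotientGroup.mk_surjective q
    have hx : (x : G) ∈ (N : Set G) * (H : Set G) := by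
      have h2 : (x : G) ∈ ((N ⊔ H : Subgroup G) : Set G) := by
        show (x : G) ∈ (N ⊔ H : Subgroup G)
        rw [sup_comm]
        exact x.2
      rwa [Subgroup.normal_mul] at h2
    obtain ⟨n, hn, h, hh, heq⟩ := hx
    refine ⟨⟨n, hn⟩, ?_⟩
    rw [QuotientGroup.eq]
    show (⟨n, _⟩ : (H ⊔ N : Subgroup G))⁻¹ * x ∈ H.subgroupOf (H ⊔ N)
    have : ((⟨n, Subgroup.mem_sup_right hn⟩ : (H ⊔ N : Subgroup G))⁻¹ * x : G) = n⁻¹ * x := rfl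
    rw [Subgroup.mem_subgroupOf]
    show (n⁻¹ : G) * x ∈ H
    rw [← heq]
    simpa using hh
  exact Subgroup.index_ne_zero_of_finite

end aux

/-- If `N` is a finite normal subgroup of a profinite group `G` and `G/N` is orbitally
sound, then `G` is orbitally sound. -/
theorem orbitallySound_of_quotient_by_finite {G : Type*} [Group G] [TopologicalSpace G]
    [IsTopologicalGroup G] [CompactSpace G] [T2Space G] [TotallyDisconnectedSpace G]
    (N : Subgroup G) [N.Normal] (hNfin : (N : Set G).Finite)
    (hQ : OrbitallySound (G ⧸ N)) :
    OrbitallySound G := by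
  intro H hH
  obtain ⟨⟨hHcl, hHnorm⟩, hiso⟩ := hH
  -- Step 1: N ≤ H
  have hNH : N ≤ H := by
    have horb : IsOrbital (H ⊔ N) := by
      constructor
      · rw [Subgroup.mul_normal]
        exact (hHcl.isCompact.mul hNfin.isCompact).isClosed
      · exact Subgroup.isOpen_mono (normalizer_le_normalizer_sup H N) hHnorm
    by_contra hnle
    have hlt : H < H ⊔ N := lt_of_le_of_ne le_sup_left (by
      intro heq
      exact hnle (heq ▸ le_sup_right))
    exact relindex_sup_ne_zero H N hNfin (hiso _ horb hlt)
  -- notation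
  set π : G →* G ⧸ N := QuotientGroup.mk' N with hπ
  have hπsurj : Function.Surjective π := QuotientGroup.mk'_surjective N
  have hker : π.ker = N := QuotientGroup.ker_mk' N
  have hcomap : Subgroup.comap π (Subgroup.map π H) = H := by
    rw [Subgroup.comap_map_eq, hker, sup_of_le_left hNH]
  -- Step 2: image of H is isolated orbital in G/N
  have hHbar : IsIsolatedOrbital (Subgroup.map π H) := by
    refine ⟨⟨?_, ?_⟩, ?_⟩
    · -- closed
      rw [← (QuotientGroup.isQuotientMap_mk N).isClosed_preimage]
      have : (QuotientGroup.mk : G → G ⧸ N) ⁻¹' (Subgroup.map π H : Set (G ⧸ N))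
          = (Subgroup.comap π (Subgroup.map π H) : Set G) := rfl
      rw [this, hcomap]
      exact hHcl
    · -- normalizer open
      apply Subgroup.isOpen_mono (Subgroup.le_normalizer_map (H := H) π)
      have : ((Subgroup.map π (Subgroup.normalizer (H : Set G)) : Subgroup (G ⧸ N)) : Set (G ⧸ N))
          = (QuotientGroup.mk : G → G ⧸ N) '' (Subgroup.normalizer (H : Set G) : Set G) := rfl
      rw [this]
      exact QuotientGroup.isOpenMap_coe _ hHnorm
    · -- isolated
      intro K' hK' hlt
      by_contra hne
      obtain ⟨hK'cl, hK'norm⟩ := hK'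
      set K := Subgroup.comap π K' with hK
      have hKcl : IsClosed (K : Set G) :=
        hK'cl.preimage continuous_quot_mk
      have hKnorm : IsOpen (Subgroup.normalizer (K : Set G) : Set G) :=
        Subgroup.isOpen_mono (Subgroup.le_normalizer_comap (H := K') π)
          (hK'norm.preimage continuous_quot_mk)
      have hmapK : Subgroup.map π K = K' := Subgroup.map_comap_eq_self_of_surjective hπsurj K'
      have hHK : H < K := by
        refine lt_of_le_of_ne ?_ ?_
        · rw [← hcomap]; exact Subgroup.comap_mono hlt.le
        · intro heq
          apply hlt.ne
          rw [heq, hmapK]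
      have := hiso K ⟨hKcl, hKnorm⟩ hHK
      rw [← hcomap, hK, Subgroup.relIndex_comap, hmapK] at this
      exact hne this
  -- Step 3: conclude
  have hnormal : (Subgroup.map π H).Normal := hQ _ hHbar
  have := hnormal.comap π
  rwa [hcomap] at this
end

section
/- Let G be a profinite group satisfying the maximum condition on closed subgroups, and let H be an orbital closed subgroup of G. Then H has finite index in its isolator i_G(H); equivalently, H is an open subgroup of i_G(H). -/
open scoped Pointwise

namespace OrbIso
variable {G : Type*} [Group G]

lemma smul_eq_of_mem_normalizer {K : Subgroup G} {n : G} (hn : n ∈ Subgroup.normalizer (K : Set G)) :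
    ConjAct.toConjAct n • K = K := by
  ext x
  rw [Subgroup.mem_pointwise_smul_iff_inv_smul_mem, ← ConjAct.toConjAct_inv,
    ConjAct.toConjAct_smul, inv_inv]
  rw [Subgroup.mem_normalizer_iff.mp hn (n⁻¹ * x * n)]
  have h : n * (n⁻¹ * x * n) * n⁻¹ = x := by group
  rw [h]

lemma mem_normalizer_of_smul_eq {K : Subgroup G} {n : G}
    (h : ConjAct.toConjAct n • K = K) : n ∈ Subgroup.normalizer (K : Set G) := by
  rw [Subgroup.mem_normalizer_iff]
  intro x
  constructor
  · intro hx
    rw [← h]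
    rw [show n * x * n⁻¹ = ConjAct.toConjAct n • x from (ConjAct.toConjAct_smul n x).symm]
    exact Subgroup.smul_mem_pointwise_smul _ _ _ hx
  · intro hx
    rw [← h] at hx
    rw [show n * x * n⁻¹ = ConjAct.toConjAct n • x from (ConjAct.toConjAct_smul n x).symm] at hx
    exact Subgroup.smul_mem_pointwise_smul_iff.mp hx

lemma relIndex_smul (g : ConjAct G) (A B : Subgroup G) :
    (g • A).relIndex (g • B) = A.relIndex B := by
  unfold Subgroup.relIndex Subgroup.index
  exact (Nat.card_congr (Subgroup.quotConjEquiv A B g)).symm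

/-- The set of conjugates of a subgroup with finite-index normalizer is finite. -/
lemma finite_conjugates {K : Subgroup G} (hfin : Finite (G ⧸ Subgroup.normalizer (K : Set G))) :
    (Set.range fun g : G => ConjAct.toConjAct g • K).Finite := by
  classical
  have hwd : ∀ a b : G, (QuotientGroup.leftRel (Subgroup.normalizer (K : Set G))) a b →
      ConjAct.toConjAct a • K = ConjAct.toConjAct b • K := by
    intro a b hab
    rw [QuotientGroup.leftRel_apply] at hab
    have h : ConjAct.toConjAct b • K
        = ConjAct.toConjAct a • (ConjAct.toConjAct (a⁻¹ * b) • K) := by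
      rw [smul_smul, ← map_mul, mul_inv_cancel_left]
    rw [h, smul_eq_of_mem_normalizer hab]
  let F : G ⧸ Subgroup.normalizer (K : Set G) → Subgroup G :=
    Quotient.lift (fun g => ConjAct.toConjAct g • K) hwd
  apply (Set.finite_range F).subset
  rintro _ ⟨g, rfl⟩
  exact ⟨QuotientGroup.mk g, rfl⟩

lemma isOfFinOrder_of_coe {M : Type*} [Group M] {H : Subgroup M} (z : H)
    (h : IsOfFinOrder (z : M)) : IsOfFinOrder z := by
  rw [← orderOf_pos_iff] at h ⊢
  rw [← orderOf_injective H.subtype H.subtype_injective z]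
  exact h

lemma finite_closure_torsion {A : Type*} [CommGroup A] {s : Set A} (hs : s.Finite)
    (htor : ∀ x ∈ s, IsOfFinOrder x) : Finite (Subgroup.closure s) := by
  revert htor
  refine Set.Finite.induction_on s hs ?_ ?_
  · intro _
    rw [Subgroup.closure_empty]
    have hb : ((⊥ : Subgroup A) : Set A).Finite := by
      rw [Subgroup.coe_bot]; exact Set.finite_singleton 1
    exact hb.to_subtype
  · intro a s' ha hs' ih htor
    have h1 : Finite (Subgroup.zpowers a) :=
      Finite.of_equiv _ (finEquivZPowers (htor a (Set.mem_insert a s')))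
    have h2 : Finite (Subgroup.closure s') := ih fun x hx => htor x (Set.mem_insert_of_mem a hx)
    have hset : ((Subgroup.zpowers a ⊔ Subgroup.closure s' : Subgroup A) : Set A).Finite := by
      rw [Subgroup.mul_normal]
      exact (Set.finite_coe_iff.mp h1).mul (Set.finite_coe_iff.mp h2)
    have hfin : Finite ((Subgroup.zpowers a ⊔ Subgroup.closure s' : Subgroup A)) := hset.to_subtype
    rw [Set.insert_eq, Subgroup.closure_union, ← Subgroup.zpowers_eq_closure]
    exact hfin

/-- Dietzmann's lemma: a finite subgroup all of whose elements have finite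
conjugacy classes is contained in a finite normal subgroup. -/
lemma dietzmann {Q : Type*} [Group Q] (F : Subgroup Q) (hFfin : Finite F)
    (hclass : ∀ x ∈ F, (conjugatesOf x).Finite) :
    ∃ D : Subgroup Q, D.Normal ∧ Finite D ∧ F ≤ D := by
  classical
  set X : Set Q := Group.conjugatesOfSet (F : Set Q) with hX
  have hFset : (F : Set Q).Finite := Set.finite_coe_iff.mpr hFfin
  have hXfin : X.Finite := Set.Finite.biUnion hFset fun a ha => hclass a ha
  have hXtor : ∀ x ∈ X, IsOfFinOrder x := by
    intro x hx
    obtain ⟨a, haF, haconj⟩ := Group.mem_conjugatesOfSet_iff.mp hx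
    have ha' : IsOfFinOrder a := by
      have := isOfFinOrder_of_finite (⟨a, haF⟩ : F)
      exact F.subtype.isOfFinOrder this
    obtain ⟨c, hc⟩ := isConj_iff.mp haconj
    have := ((MulAut.conj c).toMonoidHom).isOfFinOrder ha'
    simpa [hc] using this
  have hXclassfin : ∀ x ∈ X, (conjugatesOf x).Finite := by
    intro x hx
    obtain ⟨a, haF, haconj⟩ := Group.mem_conjugatesOfSet_iff.mp hx
    have h : conjugatesOf x = conjugatesOf a := by
      ext y
      exact ⟨fun hy => haconj.trans hy, fun hy => haconj.symm.trans hy⟩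
    rw [h]
    exact hclass a haF
  set D : Subgroup Q := Subgroup.closure X with hD
  have hDnormal : D.Normal := by
    have h : D = Subgroup.normalClosure (F : Set Q) := rfl
    rw [h]; infer_instance
  have hFD : F ≤ D := by
    intro x hx
    exact Subgroup.subset_normalClosure (s := (F : Set Q)) hx
  set X' : Set D := ((↑) : D → Q) ⁻¹' X with hX'
  have hgen : Subgroup.closure X' = (⊤ : Subgroup D) := Subgroup.closure_closure_coe_preimage
  have hX'fin : X'.Finite := hXfin.preimage Subtype.val_injective.injOn
  have hX'tor : ∀ x' ∈ X', IsOfFinOrder x' :=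
    fun x' hx' => isOfFinOrder_of_coe x' (hXtor _ hx')
  haveI hfg : Group.FG D := Group.fg_iff.mpr ⟨X', hgen, hX'fin⟩
  haveI hXsubfin : Finite ↥X := hXfin.to_subtype
  set Z₀ : Subgroup Q :=
    ⨅ x : X, (MulAction.stabilizer (ConjAct Q) (x : Q)).comap ConjAct.toConjAct.toMonoidHom
    with hZ₀
  haveI hZ₀fi : Z₀.FiniteIndex := by
    refine Subgroup.finiteIndex_iInf fun x => ?_
    constructor
    rw [Subgroup.index_comap_of_surjective _ (MulEquiv.surjective _)]
    rw [MulAction.index_stabilizer]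
    have horb : MulAction.orbit (ConjAct Q) (x : Q) = conjugatesOf (x : Q) := by
      ext y
      rw [ConjAct.mem_orbit_conjAct]
      exact isConj_comm
    rw [horb]
    have hfin := hXclassfin _ x.2
    have hne : (conjugatesOf (x : Q)).Nonempty := ⟨(x : Q), IsConj.refl _⟩
    exact ((Set.ncard_pos hfin).mpr hne).ne'
  have hZ₀comm : ∀ g ∈ Z₀, ∀ x ∈ X, Commute g x := by
    intro g hg x hx
    have hg' : g ∈ (MulAction.stabilizer (ConjAct Q) x).comap (ConjAct.toConjAct (G := Q)).toMonoidHom := by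
      rw [hZ₀] at hg
      exact Subgroup.mem_iInf.mp hg ⟨x, hx⟩
    have h1 : ConjAct.toConjAct g • x = x := hg'
    rw [ConjAct.toConjAct_smul] at h1
    have h2 : g * x = x * g := by
      calc g * x = (g * x * g⁻¹) * g := by group
      _ = x * g := by rw [h1]
    exact h2
  haveI hcenterFI : (Subgroup.center D).FiniteIndex := by
    have hle : Z₀.subgroupOf D ≤ Subgroup.center D := by
      intro z hz
      rw [Subgroup.mem_center_iff]
      intro γ
      have hz' : (z : Q) ∈ Z₀ := hz
      have hcom : ∀ q, q ∈ Subgroup.closure X → Commute (z : Q) q := by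
        intro q hq
        induction hq using Subgroup.closure_induction with
        | mem x hx => exact hZ₀comm _ hz' x hx
        | one => exact Commute.one_right _
        | mul x y hx hy ihx ihy => exact ihx.mul_right ihy
        | inv x hx ihx => exact ihx.inv_right
      exact Subtype.ext ((hcom (γ : Q) γ.2).symm)
    exact Subgroup.finiteIndex_of_le hle
  set ψ := MonoidHom.transferCenterPow D with hψ
  set n := (Subgroup.center D).index with hn
  have hnzero : n ≠ 0 := hcenterFI.index_ne_zero
  letI : CommGroup (Subgroup.center D) := { (inferInstance : Group (Subgroup.center D)) with
    mul_comm := fun a b => Subtype.ext (Subgroup.mem_center_iff.mp b.2 (a : D)) }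
  haveI himgfin : Finite ψ.range := by
    have hr : ψ.range = Subgroup.closure (ψ '' X') := by
      rw [MonoidHom.range_eq_map, ← hgen, MonoidHom.map_closure]
    rw [hr]
    refine finite_closure_torsion (hX'fin.image ψ) ?_
    rintro _ ⟨x', hx', rfl⟩
    exact ψ.isOfFinOrder (hX'tor x' hx')
  haveI hKfi : ψ.ker.FiniteIndex := by
    constructor
    rw [Subgroup.index_ker]
    exact Nat.card_ne_zero.mpr ⟨⟨1⟩, himgfin⟩
  haveI hKZfi : (ψ.ker ⊓ Subgroup.center D).FiniteIndex := inferInstance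
  haveI hKZfg : Group.FG ↥(ψ.ker ⊓ Subgroup.center D) := inferInstance
  have hKZtor : ∀ z : (ψ.ker ⊓ Subgroup.center D : Subgroup D), IsOfFinOrder z := by
    intro z
    have hker : (z : D) ∈ ψ.ker := z.2.1
    have h1 : ψ (z : D) = 1 := hker
    have h2 : ((ψ (z : D)) : D) = (z : D) ^ n := MonoidHom.transferCenterPow_apply _
    rw [h1] at h2
    have hpow : (z : D) ^ n = 1 := by rw [← h2]; rfl
    exact isOfFinOrder_of_coe z (isOfFinOrder_iff_pow_eq_one.mpr
      ⟨n, Nat.pos_of_ne_zero hnzero, hpow⟩)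
  have hKZfin : Finite (ψ.ker ⊓ Subgroup.center D : Subgroup D) := by
    set B' := (ψ.ker ⊓ Subgroup.center D).subgroupOf (Subgroup.center D) with hB'
    have e := Subgroup.subgroupOfEquivOfLe
      (inf_le_right : ψ.ker ⊓ Subgroup.center D ≤ Subgroup.center D)
    haveI : Group.FG B' := Group.fg_of_surjective (f := e.symm.toMonoidHom) e.symm.surjective
    have htor : Monoid.IsTorsion B' := by
      intro b
      have h1 := hKZtor (e b)
      rw [← orderOf_pos_iff] at h1 ⊢
      rw [← orderOf_injective e.toMonoidHom e.injective b]
      exact h1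
    haveI : Finite B' := CommGroup.finite_of_fg_torsion _ htor
    exact Finite.of_equiv _ e.toEquiv
  have hKfin : Finite ψ.ker := by
    set S₁ := (ψ.ker ⊓ Subgroup.center D).subgroupOf ψ.ker with hS₁
    haveI hS₁fi : S₁.FiniteIndex := by
      rw [hS₁, Subgroup.inf_subgroupOf_left]
      infer_instance
    have e2 := Subgroup.subgroupOfEquivOfLe
      (inf_le_left : ψ.ker ⊓ Subgroup.center D ≤ ψ.ker)
    haveI : Finite S₁ := Finite.of_equiv _ e2.symm.toEquiv
    haveI : Finite ((↥ψ.ker) ⧸ S₁) := (Nat.card_ne_zero.mp hS₁fi.index_ne_zero).2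
    exact Finite.of_equiv _ (Subgroup.groupEquivQuotientProdSubgroup (s := S₁)).symm
  haveI : Finite (D ⧸ ψ.ker) := (Nat.card_ne_zero.mp hKfi.index_ne_zero).2
  haveI hDfin : Finite D :=
    Finite.of_equiv _ (Subgroup.groupEquivQuotientProdSubgroup (s := ψ.ker)).symm
  exact ⟨D, hDnormal, hDfin, hFD⟩

variable [TopologicalSpace G] [IsTopologicalGroup G]

/-- A subgroup containing a closed subgroup with finite relative index is closed. -/
lemma isClosed_of_relIndex {K W : Subgroup G} (hK : IsClosed (K : Set G)) (hle : K ≤ W)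
    (h0 : K.relIndex W ≠ 0) : IsClosed (W : Set G) := by
  classical
  have hfin : Finite (W ⧸ K.subgroupOf W) := by
    have h := Nat.card_ne_zero.mp h0
    exact h.2
  have hcover : (W : Set G) =
      ⋃ q : W ⧸ K.subgroupOf W, ((q.out : W) : G) • (K : Set G) := by
    ext x
    constructor
    · intro hx
      refine Set.mem_iUnion.mpr ⟨QuotientGroup.mk (⟨x, hx⟩ : W), ?_⟩
      rw [Set.mem_smul_set_iff_inv_smul_mem]
      have hq := QuotientGroup.out_eq' (QuotientGroup.mk (s := K.subgroupOf W) (⟨x, hx⟩ : W))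
      have hmem : ((QuotientGroup.mk (s := K.subgroupOf W) (⟨x, hx⟩ : W)).out)⁻¹ * ⟨x, hx⟩
          ∈ K.subgroupOf W := QuotientGroup.eq.mp hq
      rw [Subgroup.mem_subgroupOf] at hmem
      simpa using hmem
    · intro hx
      obtain ⟨q, hq⟩ := Set.mem_iUnion.mp hx
      obtain ⟨k, hk, rfl⟩ := hq
      exact W.mul_mem (q.out : W).2 (hle hk)
  rw [hcover]
  exact isClosed_iUnion_of_finite fun q => hK.smul _

end OrbIso


/-- If `G` is a profinite group satisfying the maximum condition on closed subgroups and
`H` is an orbital closed subgroup, then `H` is contained in its isolator with finite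
index (equivalently, `H` is open in `i_G(H)`). -/

theorem orbital_finiteIndex_in_isolator {G : Type*} [Group G] [TopologicalSpace G]
    [IsTopologicalGroup G] [CompactSpace G] [T2Space G] [TotallyDisconnectedSpace G]
    (hmax : MaxClosedSubgroups G)
    (H : Subgroup G) (hH : IsOrbital H) :
    H ≤ isolator H ∧ H.relIndex (isolator H) ≠ 0 := by
  classical
  obtain ⟨hHclosed, hHopen⟩ := hH
  set S : Set (Subgroup G) := {L : Subgroup G | IsOrbital L ∧ H ≤ L ∧ H.relIndex L ≠ 0} with hS
  -- Step 1: every member of S lies in the commensurator of H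
  have hLC : ∀ L ∈ S, L ≤ Subgroup.Commensurable.commensurator H := by
    rintro L ⟨hLorb, hHL, hrel⟩ l hl
    rw [Subgroup.Commensurable.commensurator_mem_iff]
    have hlL : ConjAct.toConjAct l • L = L :=
      OrbIso.smul_eq_of_mem_normalizer (Subgroup.le_normalizer hl)
    have h1 : ConjAct.toConjAct l • H ≤ L := by
      rw [← hlL]
      exact Subgroup.pointwise_smul_le_pointwise_smul_iff.mpr hHL
    have h2 : (ConjAct.toConjAct l • H).relIndex L ≠ 0 := by
      rw [← hlL, OrbIso.relIndex_smul]
      exact hrel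
    exact ⟨fun h0 => h2 (Subgroup.relIndex_eq_zero_of_le_right hHL h0),
      fun h0 => hrel (Subgroup.relIndex_eq_zero_of_le_right h1 h0)⟩
  set C := Subgroup.Commensurable.commensurator H with hC
  -- Step 2: the intersection of the C-conjugates of H
  set Hs : Subgroup G := ⨅ c : C, ConjAct.toConjAct (c : G) • H with hHs
  have hHsleH : Hs ≤ H := by
    have h := iInf_le (fun c : C => ConjAct.toConjAct (c : G) • H) ⟨1, one_mem _⟩
    simpa using h
  have hsmulHs : ∀ c ∈ C, ConjAct.toConjAct c • Hs = Hs := by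
    have key : ∀ c ∈ C, ConjAct.toConjAct c • Hs ≤ Hs := by
      intro c hc
      rw [hHs]
      refine le_iInf fun d => ?_
      have h1 : Hs ≤ ConjAct.toConjAct (((⟨c, hc⟩ : C)⁻¹ * d : C) : G) • H := by
        rw [hHs]; exact iInf_le _ _
      have h2 := Subgroup.pointwise_smul_le_pointwise_smul_iff
        (a := ConjAct.toConjAct c) |>.mpr h1
      rw [hHs] at h2
      refine h2.trans (le_of_eq ?_)
      rw [smul_smul, ← map_mul]
      congr 2
      push_cast
      group
    intro c hc
    refine le_antisymm (key c hc) ?_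
    have h3 := key c⁻¹ (inv_mem hc)
    have h5 := Subgroup.pointwise_smul_le_pointwise_smul_iff
      (a := ConjAct.toConjAct c) |>.mpr h3
    rwa [smul_smul, ← map_mul, mul_inv_cancel, map_one, one_smul] at h5
  have hCN : C ≤ Subgroup.normalizer (Hs : Set G) := fun c hc => OrbIso.mem_normalizer_of_smul_eq (hsmulHs c hc)
  -- Step 3: Hs has finite relative index in H
  have hHsrel : Hs.relIndex H ≠ 0 := by
    have hbig : (Set.range fun g : G => ConjAct.toConjAct g • H).Finite :=
      OrbIso.finite_conjugates (Subgroup.quotient_finite_of_isOpen _ hHopen)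
    have hsubf : (Set.range fun c : C => ConjAct.toConjAct (c : G) • H).Finite :=
      hbig.subset (by rintro _ ⟨c, rfl⟩; exact ⟨(c : G), rfl⟩)
    have hiInf : Hs = ⨅ K ∈ Set.range (fun c : C => ConjAct.toConjAct (c : G) • H), K := by
      rw [hHs]
      exact (iInf_range (g := fun K => K)).symm
    have main : ∀ s : Set (Subgroup G), s.Finite → (∀ K ∈ s, K.relIndex H ≠ 0) →
        (⨅ K ∈ s, K).relIndex H ≠ 0 := by
      intro s hs
      refine Set.Finite.induction_on s hs ?_ ?_
      · intro _
        rw [iInf_emptyset, Subgroup.relIndex_top_left]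
        exact one_ne_zero
      · intro a s' ha hs' ih hmem
        rw [iInf_insert]
        exact Subgroup.relIndex_inf_ne_zero (hmem a (Set.mem_insert _ _))
          (ih fun K hK => hmem K (Set.mem_insert_of_mem _ hK))
    rw [hiInf]
    refine main _ hsubf ?_
    rintro _ ⟨c, rfl⟩
    exact ((Subgroup.Commensurable.commensurator_mem_iff H (c : G)).mp c.2).1
  -- Step 4: Hs is closed
  have hHsclosed : IsClosed (Hs : Set G) := by
    rw [hHs, Subgroup.coe_iInf]
    refine isClosed_iInter fun c => ?_
    rw [Subgroup.coe_pointwise_smul]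
    have h : (ConjAct.toConjAct (c : G)) • (H : Set G)
        = (fun x : G => (c : G)⁻¹ * x * (c : G)) ⁻¹' (H : Set G) := by
      ext x
      rw [Set.mem_smul_set_iff_inv_smul_mem, ← ConjAct.toConjAct_inv,
        ConjAct.toConjAct_smul, inv_inv]
      exact Iff.rfl
    rw [h]
    exact hHclosed.preimage ((continuous_mul_left _).mul continuous_const)
  -- Step 5: work modulo Hs inside its normalizer
  set N' := Subgroup.normalizer (Hs : Set G) with hN'
  haveI : (Hs.subgroupOf N').Normal := Subgroup.normal_in_normalizer
  set φ := QuotientGroup.mk' (Hs.subgroupOf N') with hφ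
  have hφsurj : Function.Surjective φ := QuotientGroup.mk'_surjective _
  have hker : φ.ker = Hs.subgroupOf N' := QuotientGroup.ker_mk' _
  have R1 : ∀ W : Subgroup G, W ≤ N' →
      Hs.relIndex W = Nat.card ((W.subgroupOf N').map φ) := by
    intro W hW
    rw [← Subgroup.relIndex_subgroupOf hW]
    conv_lhs => rw [← hker]
    rw [Subgroup.relIndex_ker]
  set Fam : Set (Subgroup G) :=
    {W | Hs ≤ W ∧ W ≤ N' ∧ Hs.relIndex W ≠ 0 ∧ (W.subgroupOf N').Normal} with hFam
  have hFamclosed : ∀ W ∈ Fam, IsClosed (W : Set G) := fun W hW =>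
    OrbIso.isClosed_of_relIndex hHsclosed hW.1 hW.2.2.1
  have hFamne : Fam.Nonempty :=
    ⟨Hs, le_rfl, Subgroup.le_normalizer,
      by rw [Subgroup.relIndex_self]; exact one_ne_zero, Subgroup.normal_in_normalizer⟩
  obtain ⟨M, hMFam, hMmax⟩ := hmax Fam hFamne hFamclosed
  have R1fin : ∀ W ∈ Fam, Finite ((W.subgroupOf N').map φ) := by
    intro W hW
    have h := hW.2.2.1
    rw [R1 W hW.2.1] at h
    exact (Nat.card_ne_zero.mp h).2
  have hjoin : ∀ W ∈ Fam, W ⊔ M ∈ Fam := by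
    intro W hW
    have hsub : (W ⊔ M).subgroupOf N' = (W.subgroupOf N') ⊔ (M.subgroupOf N') := by
      apply Subgroup.map_injective N'.subtype_injective
      rw [Subgroup.map_sup, Subgroup.subgroupOf_map_subtype, Subgroup.subgroupOf_map_subtype,
        Subgroup.subgroupOf_map_subtype, inf_eq_left.mpr hW.2.1, inf_eq_left.mpr hMFam.2.1,
        inf_eq_left.mpr (sup_le hW.2.1 hMFam.2.1)]
    haveI hWn : (W.subgroupOf N').Normal := hW.2.2.2
    haveI hMn : (M.subgroupOf N').Normal := hMFam.2.2.2
    refine ⟨hW.1.trans le_sup_left, sup_le hW.2.1 hMFam.2.1, ?_, ?_⟩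
    · rw [R1 _ (sup_le hW.2.1 hMFam.2.1), hsub, Subgroup.map_sup]
      haveI h1 : Finite ((W.subgroupOf N').map φ) := R1fin W hW
      haveI h2 : Finite ((M.subgroupOf N').map φ) := R1fin M hMFam
      haveI hn2 : (((M.subgroupOf N').map φ)).Normal := hMn.map φ hφsurj
      have hfinset : (((W.subgroupOf N').map φ ⊔ (M.subgroupOf N').map φ :
          Subgroup (↥N' ⧸ Hs.subgroupOf N')) : Set (↥N' ⧸ Hs.subgroupOf N')).Finite := by
        rw [Subgroup.mul_normal]
        exact (Set.finite_coe_iff.mp h1).mul (Set.finite_coe_iff.mp h2)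
      have hfin2 : Finite (((W.subgroupOf N').map φ ⊔ (M.subgroupOf N').map φ :
          Subgroup (↥N' ⧸ Hs.subgroupOf N'))) := hfinset.to_subtype
      exact Nat.card_ne_zero.mpr ⟨⟨1⟩, hfin2⟩
    · rw [hsub]
      infer_instance
  have hleM : ∀ W ∈ Fam, W ≤ M := by
    intro W hW
    have h := hMmax (W ⊔ M) (hjoin W hW) le_sup_right
    rw [← h]
    exact le_sup_left
  -- Step 6: every member of S is contained in M
  have hLM : ∀ L ∈ S, L ≤ M := by
    intro L hL
    obtain ⟨hLorb, hHL, hrelHL⟩ := hL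
    have hLN : L ≤ N' := (hLC L ⟨hLorb, hHL, hrelHL⟩).trans hCN
    have hHsL : Hs ≤ L := hHsleH.trans hHL
    have hrelHsL : Hs.relIndex L ≠ 0 := by
      have h := Subgroup.relIndex_mul_relIndex Hs H L hHsleH hHL
      intro h0
      have := mul_ne_zero hHsrel hrelHL
      rw [h] at this
      exact this h0
    set FL := (L.subgroupOf N').map φ with hFL
    haveI hFLfin : Finite FL := by
      have h := hrelHsL
      rw [R1 L hLN] at h
      exact (Nat.card_ne_zero.mp h).2
    have hclassfin : ∀ x ∈ FL, (conjugatesOf x).Finite := by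
      intro x hx
      have hbigL : (Set.range fun g : G => ConjAct.toConjAct g • L).Finite :=
        OrbIso.finite_conjugates (Subgroup.quotient_finite_of_isOpen _ hLorb.2)
      have hKfin : (Set.range fun p : N' => ConjAct.toConjAct (p : G) • L).Finite :=
        hbigL.subset (by rintro _ ⟨p, rfl⟩; exact ⟨(p : G), rfl⟩)
      have heachfin : ∀ K ∈ Set.range (fun p : N' => ConjAct.toConjAct (p : G) • L),
          (((K.subgroupOf N').map φ : Subgroup (↥N' ⧸ Hs.subgroupOf N')) :
            Set (↥N' ⧸ Hs.subgroupOf N')).Finite := by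
        rintro _ ⟨p, rfl⟩
        have hpn : (p : G) ∈ Subgroup.normalizer (N' : Set G) := Subgroup.le_normalizer p.2
        have hKN : ConjAct.toConjAct (p : G) • L ≤ N' := by
          have h1 : ConjAct.toConjAct (p : G) • L ≤ ConjAct.toConjAct (p : G) • N' :=
            Subgroup.pointwise_smul_le_pointwise_smul_iff.mpr hLN
          rwa [OrbIso.smul_eq_of_mem_normalizer hpn] at h1
        have hrelK : Hs.relIndex (ConjAct.toConjAct (p : G) • L) ≠ 0 := by
          have h2 : ConjAct.toConjAct (p : G) • Hs = Hs :=
            OrbIso.smul_eq_of_mem_normalizer p.2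
          rw [← h2, OrbIso.relIndex_smul]
          exact hrelHsL
        rw [R1 _ hKN] at hrelK
        exact Set.finite_coe_iff.mp (Nat.card_ne_zero.mp hrelK).2
      have hsubset : conjugatesOf x ⊆
          ⋃ K ∈ Set.range (fun p : N' => ConjAct.toConjAct (p : G) • L),
            (((K.subgroupOf N').map φ : Subgroup (↥N' ⧸ Hs.subgroupOf N')) :
              Set (↥N' ⧸ Hs.subgroupOf N')) := by
        intro y hy
        obtain ⟨q, hq⟩ := isConj_iff.mp (hy : IsConj x y)
        obtain ⟨p, rfl⟩ := hφsurj q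
        obtain ⟨w, hw, rfl⟩ := Subgroup.mem_map.mp hx
        refine Set.mem_biUnion ⟨p, rfl⟩ ?_
        rw [SetLike.mem_coe]
        refine Subgroup.mem_map.mpr ⟨p * w * p⁻¹, ?_, ?_⟩
        · rw [Subgroup.mem_subgroupOf]
          refine (Subgroup.mem_smul_pointwise_iff_exists _ _ _).mpr
            ⟨(w : G), Subgroup.mem_subgroupOf.mp hw, ?_⟩
          rw [ConjAct.toConjAct_smul]
          push_cast
          rfl
        · rw [map_mul, map_mul, map_inv]
          exact hq
      exact ((hKfin.biUnion heachfin).subset hsubset)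
    obtain ⟨D, hDnormal, hDfin, hFLD⟩ := OrbIso.dietzmann FL hFLfin hclassfin
    set WL := (D.comap φ).map N'.subtype with hWL
    have hWN : WL ≤ N' := Subgroup.map_subtype_le _
    have hsubW : WL.subgroupOf N' = D.comap φ :=
      Subgroup.comap_map_eq_self_of_injective N'.subtype_injective _
    have hWFam : WL ∈ Fam := by
      refine ⟨?_, hWN, ?_, ?_⟩
      · have h1 : Hs.subgroupOf N' ≤ D.comap φ := by
          intro z hz
          rw [Subgroup.mem_comap]
          have : φ z = 1 := by
            rw [← MonoidHom.mem_ker, hker]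
            exact hz
          rw [this]
          exact D.one_mem
        have h2 := Subgroup.map_mono (f := N'.subtype) h1
        rwa [Subgroup.subgroupOf_map_subtype,
          inf_eq_left.mpr (Subgroup.le_normalizer : Hs ≤ N')] at h2
      · rw [R1 _ hWN, hsubW, Subgroup.map_comap_eq_self_of_surjective hφsurj]
        exact Nat.card_ne_zero.mpr ⟨⟨1⟩, hDfin⟩
      · rw [hsubW]
        exact hDnormal.comap φ
    have hLWL : L ≤ WL := by
      have h1 : L.subgroupOf N' ≤ D.comap φ := Subgroup.map_le_iff_le_comap.mp hFLD
      have h2 := Subgroup.map_mono (f := N'.subtype) h1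
      rwa [Subgroup.subgroupOf_map_subtype, inf_eq_left.mpr hLN] at h2
    exact hLWL.trans (hleM WL hWFam)
  -- Step 7: conclude
  have hHinS : H ∈ S :=
    ⟨⟨hHclosed, hHopen⟩, le_rfl, by rw [Subgroup.relIndex_self]; exact one_ne_zero⟩
  have hiso_eq : isolator H = (⨆ L ∈ S, L).topologicalClosure := rfl
  have hHM : H ≤ M := hLM H hHinS
  have hisoM : isolator H ≤ M := by
    rw [hiso_eq]
    exact Subgroup.topologicalClosure_minimal _ (iSup₂_le hLM) (hFamclosed M hMFam)
  have hHiso : H ≤ isolator H := by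
    rw [hiso_eq]
    exact (le_iSup₂_of_le (f := fun (L : Subgroup G) (_ : L ∈ S) => L) H hHinS le_rfl).trans (Subgroup.le_topologicalClosure _)
  refine ⟨hHiso, ?_⟩
  have hHMrel : H.relIndex M ≠ 0 := by
    have heq := Subgroup.relIndex_mul_relIndex Hs H M hHsleH hHM
    intro h0
    apply hMFam.2.2.1
    rw [← heq, h0, mul_zero]
  have heq2 := Subgroup.relIndex_mul_relIndex H (isolator H) M hHiso hisoM
  intro h0
  apply hHMrel
  rw [← heq2, h0, zero_mul]
end

section
/- Let G be a profinite group satisfying the maximum condition on closed subgroups, and let H be an orbital closed subgroup of G. Then the isolator i_G(H) is an isolated orbital closed subgroup of G containing H. Furthermore, if H is normal in G, then i_G(H) is normal in G. -/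
open Subgroup Function
open scoped Pointwise
open scoped commutatorElement

section Helpers

variable {Γ : Type*} [Group Γ]

lemma mem_normalizer_iff_smul {H : Subgroup Γ} {g : Γ} :
    g ∈ Subgroup.normalizer (H : Set Γ) ↔ ConjAct.toConjAct g • H = H := by
  constructor
  · intro hg
    ext x
    rw [Subgroup.mem_pointwise_smul_iff_inv_smul_mem]
    have : (ConjAct.toConjAct g)⁻¹ • x = g⁻¹ * x * g := by
      simp [ConjAct.smul_def]
    rw [this]
    exact (Subgroup.mem_normalizer_iff''.mp hg x).symm
  · intro h
    rw [Subgroup.mem_normalizer_iff'']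
    intro x
    conv_lhs => rw [← h]
    rw [Subgroup.mem_pointwise_smul_iff_inv_smul_mem]
    have : (ConjAct.toConjAct g)⁻¹ • x = g⁻¹ * x * g := by
      simp [ConjAct.smul_def]
    rw [this]

lemma map_le_normalizer_map {Δ : Type*} [Group Δ] (f : Γ →* Δ) {A W : Subgroup Γ}
    (h : W ≤ Subgroup.normalizer (A : Set Γ)) : W.map f ≤ Subgroup.normalizer ((A.map f : Subgroup Δ) : Set Δ) := by
  rintro _ ⟨w, hw, rfl⟩
  rw [Subgroup.mem_normalizer_iff]
  intro y
  constructor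
  · rintro ⟨a, ha, rfl⟩
    exact ⟨w * a * w⁻¹, (Subgroup.mem_normalizer_iff.mp (h hw) a).mp ha, by
      simp [map_mul, map_inv]⟩
  · rintro ⟨a, ha, hfa⟩
    have : y = f (w⁻¹ * a * w) := by
      have := congrArg (fun z => (f w)⁻¹ * z * f w) hfa
      simpa [mul_assoc, map_mul, map_inv] using this.symm
    rw [this]
    exact ⟨w⁻¹ * a * w, (Subgroup.mem_normalizer_iff''.mp (h hw) a).mp ha, rfl⟩

lemma centralizer_coe_eq_iInf (A : Subgroup Γ) :
    Subgroup.centralizer (A : Set Γ) = ⨅ a : A, Subgroup.centralizer {(a : Γ)} := by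
  ext x
  simp only [Subgroup.mem_centralizer_iff, Subgroup.mem_iInf, Set.mem_singleton_iff]
  constructor
  · intro h a
    intro y hy
    subst hy
    exact h a a.2
  · intro h y hy
    exact h ⟨y, hy⟩ y rfl

lemma centralizer_union_eq (s t : Set Γ) :
    Subgroup.centralizer (s ∪ t) = Subgroup.centralizer s ⊓ Subgroup.centralizer t := by
  ext x
  simp only [Subgroup.mem_centralizer_iff, Subgroup.mem_inf, Set.mem_union]
  constructor
  · intro h
    exact ⟨fun y hy => h y (Or.inl hy), fun y hy => h y (Or.inr hy)⟩
  · rintro ⟨h1, h2⟩ y (hy | hy)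
    · exact h1 y hy
    · exact h2 y hy

lemma conj_eq_conj_iff (a w₁ w₂ : Γ) :
    w₁ * a * w₁⁻¹ = w₂ * a * w₂⁻¹ ↔ a * (w₁⁻¹ * w₂) = (w₁⁻¹ * w₂) * a := by
  constructor
  · intro h
    calc a * (w₁⁻¹ * w₂) = w₁⁻¹ * (w₁ * a * w₁⁻¹) * w₂ := by group
    _ = w₁⁻¹ * (w₂ * a * w₂⁻¹) * w₂ := by rw [h]
    _ = (w₁⁻¹ * w₂) * a := by group
  · intro h
    calc w₁ * a * w₁⁻¹ = w₁ * (a * (w₁⁻¹ * w₂)) * w₂⁻¹ := by group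
    _ = w₁ * ((w₁⁻¹ * w₂) * a) * w₂⁻¹ := by rw [h]
    _ = w₂ * a * w₂⁻¹ := by group

lemma centralizer_relindex_ne_zero {A : Subgroup Γ} [Finite A] {W : Subgroup Γ}
    (hW : W ≤ Subgroup.normalizer (A : Set Γ)) {a : Γ} (ha : a ∈ A) :
    (Subgroup.centralizer {a}).relIndex W ≠ 0 := by
  set C := Subgroup.centralizer {a} with hC
  have hmem : ∀ w : W, (w : Γ) * a * (w : Γ)⁻¹ ∈ A := fun w =>
    (Subgroup.mem_normalizer_iff.mp (hW w.2) a).mp ha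
  have hwd : ∀ w₁ w₂ : W, @Setoid.r _ (QuotientGroup.leftRel (C.subgroupOf W)) w₁ w₂ →
      (⟨(w₁ : Γ) * a * (w₁ : Γ)⁻¹, hmem w₁⟩ : A) = ⟨(w₂ : Γ) * a * (w₂ : Γ)⁻¹, hmem w₂⟩ := by
    intro w₁ w₂ hr
    rw [QuotientGroup.leftRel_apply] at hr
    have hr' : ((w₁ : Γ))⁻¹ * w₂ ∈ C := (Subgroup.mem_subgroupOf).mp hr
    have := Subgroup.mem_centralizer_singleton_iff.mp hr'
    exact Subtype.ext ((conj_eq_conj_iff a _ _).mpr this.symm)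
  have hfin : Finite (W ⧸ C.subgroupOf W) := by
    refine Finite.of_injective
      (fun q => Quotient.liftOn' q
        (fun w => (⟨(w : Γ) * a * (w : Γ)⁻¹, hmem w⟩ : A)) hwd) ?_
    intro q₁ q₂
    induction q₁ using Quotient.inductionOn'
    induction q₂ using Quotient.inductionOn'
    rename_i w₁ w₂
    intro h
    have h' : (w₁ : Γ) * a * (w₁ : Γ)⁻¹ = (w₂ : Γ) * a * (w₂ : Γ)⁻¹ := by
      simpa [Subtype.ext_iff] using h
    apply Quotient.sound'
    rw [QuotientGroup.leftRel_apply, Subgroup.mem_subgroupOf]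
    exact Subgroup.mem_centralizer_singleton_iff.mpr ((conj_eq_conj_iff a _ _).mp h').symm
  have : (C.subgroupOf W).index ≠ 0 := by
    rw [Subgroup.index_eq_card]
    exact Nat.card_ne_zero.mpr ⟨inferInstance, hfin⟩
  exact this

end Helpers


section Helpers2

variable {Γ : Type*} [Group Γ]

lemma commutator_mul_center_left (a c z : Γ) (hz : z ∈ Subgroup.center Γ) :
    ⁅a * z, c⁆ = ⁅a, c⁆ := by
  have hz1 : ∀ g : Γ, g * z = z * g := Subgroup.mem_center_iff.mp hz
  simp only [commutatorElement_def, mul_inv_rev, mul_assoc]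
  congr 1
  rw [← mul_assoc z c, ← hz1 c, mul_assoc]
  congr 1
  rw [← mul_assoc, mul_inv_cancel, one_mul]

lemma commutator_mul_center (a b z w : Γ) (hz : z ∈ Subgroup.center Γ)
    (hw : w ∈ Subgroup.center Γ) : ⁅a * z, b * w⁆ = ⁅a, b⁆ := by
  rw [commutator_mul_center_left a (b * w) z hz]
  rw [← commutatorElement_inv, commutator_mul_center_left b a w hw, commutatorElement_inv]

lemma finite_commutatorSet_of_finiteIndex_center
    (h : (Subgroup.center Γ).FiniteIndex) : Finite (commutatorSet Γ) := by
  haveI := h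
  haveI : Finite (Γ ⧸ Subgroup.center Γ) := inferInstance
  apply Set.Finite.to_subtype
  have : commutatorSet Γ ⊆
      (fun p : (Γ ⧸ Subgroup.center Γ) × (Γ ⧸ Subgroup.center Γ) =>
        ⁅(Quotient.out p.1 : Γ), (Quotient.out p.2 : Γ)⁆) '' Set.univ := by
    rintro x ⟨a, b, rfl⟩
    refine ⟨(QuotientGroup.mk a, QuotientGroup.mk b), Set.mem_univ _, ?_⟩
    obtain ⟨z, hz⟩ := QuotientGroup.mk_out_eq_mul (Subgroup.center Γ) a
    obtain ⟨w, hw⟩ := QuotientGroup.mk_out_eq_mul (Subgroup.center Γ) b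
    simp only [hz, hw]
    exact commutator_mul_center a b z w z.2 w.2
  exact Set.Finite.subset (Set.finite_univ.image _) this

/-- The quotient of `H` by `N ⊓ H` is equivalent to the image of `H` in `Γ ⧸ N`. -/
noncomputable def quotSubgroupOfEquivMap (N H : Subgroup Γ) [N.Normal] :
    (H ⧸ N.subgroupOf H) ≃ (H.map (QuotientGroup.mk' N)) := by
  have hker : ((QuotientGroup.mk' N).comp H.subtype).ker = N.subgroupOf H := by
    rw [← MonoidHom.comap_ker, QuotientGroup.ker_mk']
    rfl
  have hrange : ((QuotientGroup.mk' N).comp H.subtype).range = H.map (QuotientGroup.mk' N) := by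
    rw [MonoidHom.range_comp, Subgroup.range_subtype]
  refine Equiv.trans ?_ (Equiv.trans
    (QuotientGroup.quotientKerEquivRange ((QuotientGroup.mk' N).comp H.subtype)).toEquiv
    (Equiv.setCongr (by rw [hrange])))
  exact (QuotientGroup.quotientMulEquivOfEq hker.symm).toEquiv

lemma finite_map_mk' (N H : Subgroup Γ) [N.Normal] (h : N.relIndex H ≠ 0) :
    Finite (H.map (QuotientGroup.mk' N)) := by
  haveI : (N.subgroupOf H).FiniteIndex := ⟨h⟩
  haveI : Finite (H ⧸ N.subgroupOf H) := inferInstance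
  exact Finite.of_equiv _ (quotSubgroupOfEquivMap N H)

lemma relindex_ne_zero_of_finite_map (N H : Subgroup Γ) [N.Normal]
    (h : Finite (H.map (QuotientGroup.mk' N))) : N.relIndex H ≠ 0 := by
  have : N.relIndex H = Nat.card (H ⧸ N.subgroupOf H) := Subgroup.index_eq_card _
  rw [this, Nat.card_congr (quotSubgroupOfEquivMap N H)]
  exact Nat.card_ne_zero.mpr ⟨⟨⟨1, Subgroup.one_mem _⟩⟩, h⟩

end Helpers2


section MainHelpers
variable {Γ : Type*} [Group Γ]

lemma finite_sup {Q : Type*} [Group Q] (A B W : Subgroup Q) [Finite A] [Finite B]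
    (hWi : W.index ≠ 0) (hWA : W ≤ Subgroup.normalizer (A : Set Q)) (hWB : W ≤ Subgroup.normalizer (B : Set Q)) :
    Finite ↥(A ⊔ B) := by
  set R := A ⊔ B with hR
  have hcA : (Subgroup.centralizer (A : Set Q)).relIndex W ≠ 0 := by
    rw [centralizer_coe_eq_iInf]
    exact Subgroup.relIndex_iInf_ne_zero fun a => centralizer_relindex_ne_zero hWA a.2
  have hcB : (Subgroup.centralizer (B : Set Q)).relIndex W ≠ 0 := by
    rw [centralizer_coe_eq_iInf]
    exact Subgroup.relIndex_iInf_ne_zero fun b => centralizer_relindex_ne_zero hWB b.2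
  have hCc : (Subgroup.centralizer ((A : Set Q) ∪ B)).relIndex W ≠ 0 := by
    rw [centralizer_union_eq]
    exact Subgroup.relIndex_inf_ne_zero hcA hcB
  have hWR : W.relIndex R ≠ 0 := by
    intro h0
    exact hWi (by
      rw [← Subgroup.relIndex_top_right]
      exact Subgroup.relIndex_eq_zero_of_le_right le_top h0)
  set Cc := Subgroup.centralizer ((A : Set Q) ∪ B) ⊓ W with hCcdef
  have h3 : Cc.relIndex R ≠ 0 := by
    apply Subgroup.relIndex_ne_zero_trans (K := W)
    · rw [hCcdef, Subgroup.inf_relIndex_right]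
      exact hCc
    · exact hWR
  have hcen : Cc.subgroupOf R ≤ Subgroup.center ↥R := by
    intro x hx
    rw [Subgroup.mem_center_iff]
    intro g
    have hx' : (x : Q) ∈ Subgroup.centralizer ((A : Set Q) ∪ B) :=
      (Subgroup.mem_subgroupOf.mp hx).1
    have hRc : R ≤ Subgroup.centralizer {(x : Q)} := by
      apply sup_le
      · intro a ha
        exact Subgroup.mem_centralizer_singleton_iff.mpr
          (Subgroup.mem_centralizer_iff.mp hx' a (Or.inl ha))
      · intro b hb
        exact Subgroup.mem_centralizer_singleton_iff.mpr
          (Subgroup.mem_centralizer_iff.mp hx' b (Or.inr hb))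
    exact Subtype.ext (Subgroup.mem_centralizer_singleton_iff.mp (hRc g.2))
  haveI hZfi : (Subgroup.center ↥R).FiniteIndex := by
    constructor
    intro h0
    exact h3 (Nat.eq_zero_of_zero_dvd (h0 ▸ Subgroup.index_dvd_of_le hcen))
  haveI : Finite (commutatorSet ↥R) := finite_commutatorSet_of_finiteIndex_center inferInstance
  haveI hcomfin : Finite (commutator ↥R) := inferInstance
  -- the abelianization is finite as well
  set A₁ := A.subgroupOf R with hA₁
  set B₁ := B.subgroupOf R with hB₁
  haveI : Finite A₁ := Finite.of_equiv _ (Subgroup.subgroupOfEquivOfLe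
    (le_sup_left : A ≤ R)).symm.toEquiv
  haveI : Finite B₁ := Finite.of_equiv _ (Subgroup.subgroupOfEquivOfLe
    (le_sup_right : B ≤ R)).symm.toEquiv
  have hsup1 : A₁ ⊔ B₁ = ⊤ := by
    rw [hA₁, hB₁, ← Subgroup.subgroupOf_sup le_sup_left le_sup_right]
    exact Subgroup.subgroupOf_self R
  let φ : ↥R →* Abelianization ↥R := Abelianization.of
  have hφs : Function.Surjective φ :=
    fun y => Quotient.inductionOn' y fun x => ⟨x, rfl⟩
  have htop : Subgroup.map φ A₁ ⊔ Subgroup.map φ B₁ = ⊤ := by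
    rw [← Subgroup.map_sup, hsup1, Subgroup.map_top_of_surjective φ hφs]
  haveI : Finite (Subgroup.map φ A₁) := by
    have : (Subgroup.map φ A₁ : Set (Abelianization ↥R)) = φ '' A₁ := rfl
    exact Set.Finite.to_subtype (this ▸ Set.Finite.image φ (Set.toFinite (A₁ : Set ↥R)))
  haveI : Finite (Subgroup.map φ B₁) := by
    have : (Subgroup.map φ B₁ : Set (Abelianization ↥R)) = φ '' B₁ := rfl
    exact Set.Finite.to_subtype (this ▸ Set.Finite.image φ (Set.toFinite (B₁ : Set ↥R)))
  have habfin : Finite (Abelianization ↥R) := by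
    have hmul := Subgroup.mul_normal (Subgroup.map φ A₁) (Subgroup.map φ B₁)
    have : Set.Finite ((⊤ : Subgroup (Abelianization ↥R)) : Set (Abelianization ↥R)) := by
      rw [← htop, hmul]
      exact Set.Finite.mul (Set.toFinite _) (Set.toFinite _)
    rw [Subgroup.coe_top] at this
    exact Set.finite_univ_iff.mp this
  -- now R itself is finite
  haveI : Finite (↥R ⧸ commutator ↥R) := habfin
  exact Finite.of_equiv _ (Subgroup.groupEquivQuotientProdSubgroup (s := commutator ↥R)).symm



/-- subgroupOf respects normalizers. -/
lemma subgroupOf_le_normalizer_subgroupOf {A W P : Subgroup Γ}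
    (h : W ≤ Subgroup.normalizer (A : Set Γ)) : W.subgroupOf P ≤ Subgroup.normalizer ((A.subgroupOf P : Subgroup P) : Set P) := by
  intro w hw
  rw [Subgroup.mem_normalizer_iff]
  intro x
  rw [Subgroup.mem_subgroupOf, Subgroup.mem_subgroupOf]
  have := Subgroup.mem_normalizer_iff.mp (h (Subgroup.mem_subgroupOf.mp hw)) (x : Γ)
  simpa using this

lemma relindex_sup_ne_zero_s6 {K A B W : Subgroup Γ}
    (hKA : K ≤ A) (hKB : K ≤ B) (hN : A ⊔ B ≤ Subgroup.normalizer (K : Set Γ))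
    (hWA : W ≤ Subgroup.normalizer (A : Set Γ)) (hWB : W ≤ Subgroup.normalizer (B : Set Γ)) (hWK : W ≤ Subgroup.normalizer (K : Set Γ))
    (hWi : W.index ≠ 0) (hA : K.relIndex A ≠ 0) (hB : K.relIndex B ≠ 0) :
    K.relIndex (A ⊔ B) ≠ 0 := by
  set P := Subgroup.normalizer (K : Set Γ) with hP
  have hAP : A ≤ P := le_trans le_sup_left hN
  have hBP : B ≤ P := le_trans le_sup_right hN
  set K' := K.subgroupOf P with hK'
  haveI : K'.Normal := Subgroup.normal_in_normalizer
  set π := QuotientGroup.mk' K' with hπ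
  set A' := A.subgroupOf P with hA'
  set B' := B.subgroupOf P with hB'
  set W' := W.subgroupOf P with hW'
  haveI hFA : Finite (A'.map π) := finite_map_mk' K' A' (by
    rw [hK', hA', Subgroup.relIndex_subgroupOf hAP]; exact hA)
  haveI hFB : Finite (B'.map π) := finite_map_mk' K' B' (by
    rw [hK', hB', Subgroup.relIndex_subgroupOf hBP]; exact hB)
  have hFWi : (W'.map π).index ≠ 0 := by
    intro h0
    have hdvd : (W'.map π).index ∣ W'.index :=
      Subgroup.index_map_dvd W' (QuotientGroup.mk'_surjective K')
    have : W'.index = 0 := Nat.eq_zero_of_zero_dvd (h0 ▸ hdvd)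
    have hWP : W.relIndex P ≠ 0 := by
      intro hz
      exact hWi (by
        rw [← Subgroup.relIndex_top_right]
        exact Subgroup.relIndex_eq_zero_of_le_right le_top hz)
    exact hWP this
  have hfin : Finite ↥(A'.map π ⊔ B'.map π) :=
    finite_sup (A'.map π) (B'.map π) (W'.map π) hFWi
      (map_le_normalizer_map π (subgroupOf_le_normalizer_subgroupOf hWA))
      (map_le_normalizer_map π (subgroupOf_le_normalizer_subgroupOf hWB))
  have hmapsup : A'.map π ⊔ B'.map π = ((A ⊔ B).subgroupOf P).map π := by
    rw [← Subgroup.map_sup, hA', hB', ← Subgroup.subgroupOf_sup hAP hBP]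
  rw [hmapsup] at hfin
  have := relindex_ne_zero_of_finite_map K' ((A ⊔ B).subgroupOf P) hfin
  rwa [hK', Subgroup.relIndex_subgroupOf hN] at this



lemma conjAct_smul_normalizer_le (g : Γ) (H : Subgroup Γ) :
    ConjAct.toConjAct g • Subgroup.normalizer (H : Set Γ) ≤ Subgroup.normalizer ((ConjAct.toConjAct g • H : Subgroup Γ) : Set Γ) := by
  intro x hx
  rw [Subgroup.mem_pointwise_smul_iff_inv_smul_mem] at hx
  have hx' : g⁻¹ * x * g ∈ Subgroup.normalizer (H : Set Γ) := by
    have : (ConjAct.toConjAct g)⁻¹ • x = g⁻¹ * x * g := by simp [ConjAct.smul_def]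
    rwa [this] at hx
  rw [Subgroup.mem_normalizer_iff'']
  intro h
  rw [Subgroup.mem_pointwise_smul_iff_inv_smul_mem, Subgroup.mem_pointwise_smul_iff_inv_smul_mem]
  have e1 : (ConjAct.toConjAct g)⁻¹ • h = g⁻¹ * h * g := by simp [ConjAct.smul_def]
  have e2 : (ConjAct.toConjAct g)⁻¹ • (x⁻¹ * h * x) = g⁻¹ * (x⁻¹ * h * x) * g := by
    simp only [ConjAct.smul_def]
    simp only [ConjAct.ofConjAct_inv, ConjAct.ofConjAct_toConjAct, inv_inv]
  rw [e1, e2]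
  have h3 := Subgroup.mem_normalizer_iff''.mp hx' (g⁻¹ * h * g)
  convert h3 using 2
  group

lemma conjAct_smul_iInf {ι : Sort*} (a : ConjAct Γ) (f : ι → Subgroup Γ) :
    a • ⨅ i, f i = ⨅ i, a • f i := by
  ext x
  simp only [Subgroup.mem_pointwise_smul_iff_inv_smul_mem, Subgroup.mem_iInf]

lemma le_commensurator_of_relindex {C A : Subgroup Γ} (hCA : C ≤ A)
    (h : C.relIndex A ≠ 0) : A ≤ Commensurable.commensurator C := by
  have h1 : Commensurable C A := by
    refine ⟨h, ?_⟩
    rw [← Subgroup.inf_relIndex_right, inf_eq_right.mpr hCA, Subgroup.relIndex_self]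
    exact one_ne_zero
  intro a ha
  rw [Commensurable.commensurator_mem_iff]
  have hconj := (Commensurable.commensurable_conj (ConjAct.toConjAct a)).mp h1
  rw [mem_normalizer_iff_smul.mp (Subgroup.le_normalizer ha)] at hconj
  exact hconj.trans h1.symm

lemma relindex_conjAct_smul (H M : Subgroup Γ) (g : ConjAct Γ) :
    (g • H).relIndex (g • M) = H.relIndex M := by
  rw [Subgroup.relIndex, Subgroup.relIndex, Subgroup.index_eq_card, Subgroup.index_eq_card]
  exact (Nat.card_congr (Subgroup.quotConjEquiv H M g)).symm

lemma inf_normalizer_le_normalizer_inf {A B : Subgroup Γ} :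
    Subgroup.normalizer (A : Set Γ) ⊓ Subgroup.normalizer (B : Set Γ) ≤ Subgroup.normalizer ((A ⊓ B : Subgroup Γ) : Set Γ) := by
  intro g hg
  rw [mem_normalizer_iff_smul, Subgroup.smul_inf,
    mem_normalizer_iff_smul.mp hg.1, mem_normalizer_iff_smul.mp hg.2]

lemma inf_normalizer_le_normalizer_sup {A B : Subgroup Γ} :
    Subgroup.normalizer (A : Set Γ) ⊓ Subgroup.normalizer (B : Set Γ) ≤ Subgroup.normalizer ((A ⊔ B : Subgroup Γ) : Set Γ) := by
  intro g hg
  rw [mem_normalizer_iff_smul, Subgroup.smul_sup,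
    mem_normalizer_iff_smul.mp hg.1, mem_normalizer_iff_smul.mp hg.2]

variable [TopologicalSpace Γ] [IsTopologicalGroup Γ]

lemma coe_conjAct_smul (g : Γ) (H : Subgroup Γ) :
    ((ConjAct.toConjAct g • H : Subgroup Γ) : Set Γ) =
      ((Homeomorph.mulLeft g).trans (Homeomorph.mulRight g⁻¹)) '' (H : Set Γ) := by
  ext x
  rw [SetLike.mem_coe, Subgroup.mem_pointwise_smul_iff_inv_smul_mem]
  have e1 : (ConjAct.toConjAct g)⁻¹ • x = g⁻¹ * x * g := by simp [ConjAct.smul_def]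
  rw [e1]
  constructor
  · intro hx
    exact ⟨g⁻¹ * x * g, hx, by simp [Homeomorph.trans_apply]; group⟩
  · rintro ⟨h, hh, rfl⟩
    simpa [Homeomorph.trans_apply, mul_assoc] using hh

lemma isClosed_conjAct_smul {H : Subgroup Γ} (hH : IsClosed (H : Set Γ)) (g : Γ) :
    IsClosed ((ConjAct.toConjAct g • H : Subgroup Γ) : Set Γ) := by
  rw [coe_conjAct_smul]
  exact (Homeomorph.isClosed_image _).mpr hH

lemma isOpen_conjAct_smul {H : Subgroup Γ} (hH : IsOpen (H : Set Γ)) (g : Γ) :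
    IsOpen ((ConjAct.toConjAct g • H : Subgroup Γ) : Set Γ) := by
  rw [coe_conjAct_smul]
  exact (Homeomorph.isOpen_image _).mpr hH

lemma index_ne_zero_of_isOpen [CompactSpace Γ] {U : Subgroup Γ} (h : IsOpen (U : Set Γ)) :
    U.index ≠ 0 := by
  haveI := U.quotient_finite_of_isOpen h
  rw [Subgroup.index_eq_card]
  exact Nat.card_ne_zero.mpr ⟨inferInstance, inferInstance⟩

lemma isClosed_of_isClosed_relindex {K D : Subgroup Γ} (hKD : K ≤ D)
    (hK : IsClosed (K : Set Γ)) (hrel : K.relIndex D ≠ 0) : IsClosed (D : Set Γ) := by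
  haveI : (K.subgroupOf D).FiniteIndex := ⟨hrel⟩
  haveI : Finite (D ⧸ K.subgroupOf D) := inferInstance
  have hset : (D : Set Γ) = ⋃ q : D ⧸ K.subgroupOf D, ((Quotient.out q : D) : Γ) • (K : Set Γ) := by
    ext x
    simp only [Set.mem_iUnion]
    constructor
    · intro hx
      refine ⟨QuotientGroup.mk (⟨x, hx⟩ : D), ?_⟩
      obtain ⟨n, hn⟩ := QuotientGroup.mk_out_eq_mul (K.subgroupOf D) (⟨x, hx⟩ : D)
      rw [Set.mem_smul_set_iff_inv_smul_mem, hn]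
      have : ((((⟨x, hx⟩ : D) * n : D) : Γ))⁻¹ * x = ((n : D) : Γ)⁻¹ := by
        push_cast
        group
      rw [smul_eq_mul, this]
      exact Subgroup.inv_mem _ (Subgroup.mem_subgroupOf.mp n.2)
    · rintro ⟨q, hq⟩
      rw [Set.mem_smul_set_iff_inv_smul_mem, smul_eq_mul] at hq
      have : x = ((Quotient.out q : D) : Γ) * (((Quotient.out q : D) : Γ)⁻¹ * x) := by group
      rw [SetLike.mem_coe, this]
      exact Subgroup.mul_mem _ (Quotient.out q).2 (hKD hq)
  rw [hset]
  exact isClosed_iUnion_of_finite fun q => hK.smul _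



lemma join_mem [CompactSpace Γ] {H A B : Subgroup Γ}
    (hA : IsOrbital A) (hB : IsOrbital B) (hHA : H ≤ A) (hHB : H ≤ B)
    (hrA : H.relIndex A ≠ 0) (hrB : H.relIndex B ≠ 0) :
    IsOrbital (A ⊔ B) ∧ H ≤ A ⊔ B ∧ H.relIndex (A ⊔ B) ≠ 0 := by
  classical
  set C := A ⊓ B with hCdef
  have hCA : C ≤ A := inf_le_left
  have hCB : C ≤ B := inf_le_right
  have hHC : H ≤ C := le_inf hHA hHB
  have hCclosed : IsClosed (C : Set Γ) := by
    rw [hCdef, Subgroup.coe_inf]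
    exact hA.1.inter hB.1
  have hNCopen : IsOpen (Subgroup.normalizer (C : Set Γ) : Set Γ) := by
    apply Subgroup.isOpen_mono (inf_normalizer_le_normalizer_inf (A := A) (B := B))
    rw [Subgroup.coe_inf]
    exact hA.2.inter hB.2
  have hrHC : H.relIndex C ≠ 0 := fun h0 => hrA (by
    rw [← Subgroup.relIndex_mul_relIndex H C A hHC hCA, h0, zero_mul])
  have hrCA : C.relIndex A ≠ 0 := fun h0 => hrA (by
    rw [← Subgroup.relIndex_mul_relIndex H C A hHC hCA, h0, mul_zero])
  have hrCB : C.relIndex B ≠ 0 := fun h0 => hrB (by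
    rw [← Subgroup.relIndex_mul_relIndex H C B hHC hCB, h0, mul_zero])
  set D := A ⊔ B with hDdef
  have hDcomm : ∀ d ∈ D, Commensurable (ConjAct.toConjAct d • C) C := by
    intro d hd
    have : D ≤ Commensurable.commensurator C :=
      sup_le (le_commensurator_of_relindex hCA hrCA) (le_commensurator_of_relindex hCB hrCB)
    exact Commensurable.commensurator_mem_iff C d |>.mp (this hd)
  set f : D → Subgroup Γ := fun d => ConjAct.toConjAct (d : Γ) • C with hfdef
  -- the orbit is finite
  have hfin : (Set.range f).Finite := by
    haveI : Finite (Γ ⧸ Subgroup.normalizer (C : Set Γ)) := Subgroup.quotient_finite_of_isOpen _ hNCopen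
    have hsub : Set.range f ⊆
        Set.range (fun q : Γ ⧸ Subgroup.normalizer (C : Set Γ) => ConjAct.toConjAct (Quotient.out q) • C) := by
      rintro _ ⟨d, rfl⟩
      refine ⟨QuotientGroup.mk (d : Γ), ?_⟩
      obtain ⟨n, hn⟩ := QuotientGroup.mk_out_eq_mul (Subgroup.normalizer (C : Set Γ)) (d : Γ)
      show ConjAct.toConjAct (Quotient.out (QuotientGroup.mk (d : Γ))) • C = f d
      rw [hn, map_mul, mul_smul, mem_normalizer_iff_smul.mp n.2]
    exact (Set.finite_range _).subset hsub
  haveI hfinsub : Finite ↥(Set.range f) := hfin.to_subtype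
  set K := ⨅ d : D, f d with hKdef
  have hKC : K ≤ C := by
    refine le_trans (iInf_le f ⟨1, Subgroup.one_mem D⟩) ?_
    rw [hfdef]
    simp
  have hKclosed : IsClosed (K : Set Γ) := by
    rw [hKdef, Subgroup.coe_iInf]
    exact isClosed_iInter fun d => isClosed_conjAct_smul hCclosed _
  have hsmulK : ∀ d ∈ D, ConjAct.toConjAct d • K = K := by
    intro d hd
    rw [hKdef, conjAct_smul_iInf]
    have heq : ∀ i : D, ConjAct.toConjAct d • f i = f (⟨d, hd⟩ * i) := by
      intro i
      rw [hfdef]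
      show _ • _ • _ = _ • _
      rw [smul_smul, ← map_mul]
      rfl
    simp_rw [heq]
    apply le_antisymm
    · refine le_iInf fun i => iInf_le_of_le (⟨d, hd⟩⁻¹ * i) (le_of_eq ?_)
      rw [mul_inv_cancel_left]
    · exact le_iInf fun i => iInf_le _ (⟨d, hd⟩ * i)
  have hDnormK : D ≤ Subgroup.normalizer (K : Set Γ) := fun d hd => mem_normalizer_iff_smul.mpr (hsmulK d hd)
  have hKrelC : K.relIndex C ≠ 0 := by
    have hKeq : K = ⨅ X : ↥(Set.range f), (X : Subgroup Γ) := by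
      rw [hKdef, ← sInf_range, sInf_eq_iInf']
    rw [hKeq]
    apply Subgroup.relIndex_iInf_ne_zero
    rintro ⟨X, d, rfl⟩
    exact (hDcomm (d : Γ) d.2).1
  have hKA : K.relIndex A ≠ 0 := by
    rw [← Subgroup.relIndex_mul_relIndex K C A hKC hCA]
    exact mul_ne_zero hKrelC hrCA
  have hKB : K.relIndex B ≠ 0 := by
    rw [← Subgroup.relIndex_mul_relIndex K C B hKC hCB]
    exact mul_ne_zero hKrelC hrCB
  set NN := ⨅ X : ↥(Set.range f), Subgroup.normalizer ((X : Subgroup Γ) : Set Γ) with hNNdef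
  have hNNopen : IsOpen (NN : Set Γ) := by
    rw [hNNdef, Subgroup.coe_iInf]
    apply isOpen_iInter_of_finite
    rintro ⟨X, d, rfl⟩
    exact Subgroup.isOpen_mono (conjAct_smul_normalizer_le (d : Γ) C)
      (isOpen_conjAct_smul hNCopen _)
  have hNNK : NN ≤ Subgroup.normalizer (K : Set Γ) := by
    intro g hg
    rw [mem_normalizer_iff_smul, hKdef, conjAct_smul_iInf]
    have : ∀ i : D, ConjAct.toConjAct g • f i = f i := fun i =>
      mem_normalizer_iff_smul.mp (Subgroup.mem_iInf.mp hg ⟨f i, Set.mem_range_self i⟩)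
    simp_rw [this]
  set W := Subgroup.normalizer (A : Set Γ) ⊓ Subgroup.normalizer (B : Set Γ) ⊓ NN with hWdef
  have hWopen : IsOpen (W : Set Γ) := by
    rw [hWdef, Subgroup.coe_inf, Subgroup.coe_inf]
    exact (hA.2.inter hB.2).inter hNNopen
  have hWi : W.index ≠ 0 := index_ne_zero_of_isOpen hWopen
  have hmain : K.relIndex (A ⊔ B) ≠ 0 :=
    relindex_sup_ne_zero_s6 (hKC.trans hCA) (hKC.trans hCB) hDnormK
      (inf_le_left.trans inf_le_left) (inf_le_left.trans inf_le_right)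
      (inf_le_right.trans hNNK) hWi hKA hKB
  have hKD : K ≤ A ⊔ B := (hKC.trans hCA).trans le_sup_left
  have hclosed : IsClosed ((A ⊔ B : Subgroup Γ) : Set Γ) :=
    isClosed_of_isClosed_relindex hKD hKclosed hmain
  have hopenN : IsOpen (Subgroup.normalizer ((A ⊔ B : Subgroup Γ) : Set Γ) : Set Γ) := by
    apply Subgroup.isOpen_mono (inf_normalizer_le_normalizer_sup (A := A) (B := B))
    rw [Subgroup.coe_inf]
    exact hA.2.inter hB.2
  refine ⟨⟨hclosed, hopenN⟩, hHA.trans le_sup_left, ?_⟩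
  -- finally the relative index of H
  have h1 : H.relIndex K ≠ 0 := fun h0 =>
    hrA (Subgroup.relIndex_eq_zero_of_le_right (hKC.trans hCA) h0)
  have h2 : (H ⊓ K).relIndex K ≠ 0 := by
    rw [Subgroup.inf_relIndex_right]
    exact h1
  have h3 : (H ⊓ K).relIndex (A ⊔ B) ≠ 0 := by
    rw [← Subgroup.relIndex_mul_relIndex (H ⊓ K) K (A ⊔ B) inf_le_right hKD]
    exact mul_ne_zero h2 hmain
  intro h0
  exact h3 (zero_dvd_iff.mp
    (h0 ▸ Subgroup.relIndex_dvd_of_le_left (A ⊔ B) (inf_le_left : H ⊓ K ≤ H)))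


end MainHelpers

/-- If `G` is a profinite group satisfying the maximum condition on closed subgroups and
`H` is an orbital closed subgroup, then `i_G(H)` is an isolated orbital closed subgroup
of `G` containing `H`; moreover if `H` is normal in `G` then so is `i_G(H)`. -/
theorem isolator_isIsolatedOrbital {G : Type*} [Group G] [TopologicalSpace G]
    [IsTopologicalGroup G] [CompactSpace G] [T2Space G] [TotallyDisconnectedSpace G]
    (hmax : MaxClosedSubgroups G)
    (H : Subgroup G) (hH : IsOrbital H) :
    H ≤ isolator H ∧ IsIsolatedOrbital (isolator H) ∧
      (H.Normal → (isolator H).Normal) := by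
  classical
  set S := {L : Subgroup G | IsOrbital L ∧ H ≤ L ∧ H.relIndex L ≠ 0} with hSdef
  have hHS : H ∈ S := ⟨hH, le_rfl, by rw [Subgroup.relIndex_self]; exact one_ne_zero⟩
  obtain ⟨M, hMS, hMmax⟩ := hmax S ⟨H, hHS⟩ fun L hL => hL.1.1
  have hjoin : ∀ L ∈ S, L ≤ M := by
    intro L hL
    have hE := join_mem hMS.1 hL.1 hMS.2.1 hL.2.1 hMS.2.2 hL.2.2
    have hES : M ⊔ L ∈ S := ⟨hE.1, hE.2.1, hE.2.2⟩
    have := hMmax (M ⊔ L) hES le_sup_left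
    rw [← this]
    exact le_sup_right
  have hiso : isolator H = M := by
    have h0 : isolator H = (⨆ L ∈ S, L).topologicalClosure := rfl
    have hsup : (⨆ L ∈ S, L) = M := by
      apply le_antisymm
      · exact iSup₂_le hjoin
      · exact le_iSup₂ (f := fun (L : Subgroup G) (_ : L ∈ S) => L) M hMS
    rw [h0, hsup]
    exact le_antisymm (Subgroup.topologicalClosure_minimal M le_rfl hMS.1.1)
      (Subgroup.le_topologicalClosure M)
  rw [hiso]
  refine ⟨hMS.2.1, ⟨hMS.1, ?_⟩, ?_⟩
  · intro H' hH' hlt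
    by_contra hne
    have hmem : H' ∈ S := ⟨hH', hMS.2.1.trans hlt.le, by
      rw [← Subgroup.relIndex_mul_relIndex H M H' hMS.2.1 hlt.le]
      exact mul_ne_zero hMS.2.2 hne⟩
    exact hlt.not_ge (hjoin H' hmem)
  · intro hnorm
    have hHsmul : ∀ g : G, ConjAct.toConjAct g • H = H := by
      intro g
      apply mem_normalizer_iff_smul.mp
      rw [Subgroup.normalizer_eq_top_iff.mpr hnorm]
      trivial
    have hconj : ∀ g : G, ConjAct.toConjAct g • M ≤ M := by
      intro g
      apply hjoin
      refine ⟨⟨isClosed_conjAct_smul hMS.1.1 g, ?_⟩, ?_, ?_⟩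
      · exact Subgroup.isOpen_mono (conjAct_smul_normalizer_le g M)
          (isOpen_conjAct_smul hMS.1.2 g)
      · conv_lhs => rw [← hHsmul g]
        exact Subgroup.pointwise_smul_le_pointwise_smul_iff.mpr hMS.2.1
      · conv_lhs => rw [← hHsmul g]
        rw [relindex_conjAct_smul]
        exact hMS.2.2
    have hconj_eq : ∀ g : G, ConjAct.toConjAct g • M = M := by
      intro g
      apply le_antisymm (hconj g)
      have h2 := Subgroup.pointwise_smul_le_pointwise_smul_iff
        (a := ConjAct.toConjAct g).mpr (hconj g⁻¹)
      rwa [smul_smul, ← map_mul, mul_inv_cancel, map_one, one_smul] at h2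
    constructor
    intro n hn g
    have hmem := Subgroup.smul_mem_pointwise_smul n (ConjAct.toConjAct g) M hn
    rw [hconj_eq g] at hmem
    simpa [ConjAct.smul_def] using hmem
end

section
/- Let G be a profinite group satisfying the maximum condition on closed subgroups. If G is orbitally sound and H is a closed subgroup of G of finite index, then H is orbitally sound; that is, every closed subgroup of H that is isolated orbital as a subgroup of H is normal in H. -/
/-- If `G` is an orbitally sound profinite group satisfying the maximum condition on
closed subgroups, and `H` is a closed subgroup of finite index, then `H` (with its
subspace topology) is orbitally sound. -/
theorem orbitallySound_of_finiteIndex {G : Type*} [Group G] [TopologicalSpace G]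
    [IsTopologicalGroup G] [CompactSpace G] [T2Space G] [TotallyDisconnectedSpace G]
    (hmax : MaxClosedSubgroups G) (hG : OrbitallySound G)
    (H : Subgroup G) (hHcl : IsClosed (H : Set G)) (hHidx : H.index ≠ 0) :
    OrbitallySound H := by
  intro K hK
  obtain ⟨⟨hKcl, hKnorm⟩, hKiso⟩ := hK
  haveI : H.FiniteIndex := ⟨hHidx⟩
  have hHopen : IsOpen (H : Set G) := H.isOpen_of_isClosed_of_finiteIndex hHcl
  set K' : Subgroup G := K.map H.subtype with hK'def
  have hK'le : K' ≤ H := Subgroup.map_subtype_le K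
  have hK'cl : IsClosed (K' : Set G) := by
    have := hHcl.isClosedEmbedding_subtypeVal.isClosedMap _ hKcl
    exact this
  have hK'normOpen : IsOpen (Subgroup.normalizer (K' : Set G) : Set G) := by
    apply Subgroup.isOpen_mono (Subgroup.le_normalizer_map (H := K) H.subtype)
    have := hHopen.isOpenMap_subtype_val _ hKnorm
    exact this
  have hK'orb : IsOrbital K' := ⟨hK'cl, hK'normOpen⟩
  set S : Set (Subgroup G) := {L | IsOrbital L ∧ K' ≤ L ∧ K'.relIndex L ≠ 0} with hSdef
  obtain ⟨M, hMS, hMmax⟩ := hmax S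
    ⟨K', hK'orb, le_refl _, by simp [Subgroup.relIndex_self]⟩
    (fun L hL => hL.1.1)
  obtain ⟨hMorb, hKM, hrel⟩ := hMS
  have hMiso : IsIsolatedOrbital M := by
    refine ⟨hMorb, fun L hL hML => ?_⟩
    by_contra h0
    have hne : K'.relIndex L ≠ 0 := by
      rw [← Subgroup.relIndex_mul_relIndex K' M L hKM hML.le]
      exact mul_ne_zero hrel h0
    exact hML.ne' (hMmax L ⟨hL, hKM.trans hML.le, hne⟩ hML.le)
  have hMnormal : M.Normal := hG M hMiso
  set N₀ : Subgroup ↥H := M.comap H.subtype with hN₀def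
  have hN₀normal : N₀.Normal := hMnormal.comap H.subtype
  have hKN : K ≤ N₀ := by
    intro x hx
    exact hKM (Subgroup.mem_map_of_mem H.subtype hx)
  have hN₀orb : IsOrbital N₀ := by
    constructor
    · have : (N₀ : Set ↥H) = Subtype.val ⁻¹' (M : Set G) := by
        rfl
      rw [this]
      exact hMorb.1.preimage continuous_subtype_val
    · rw [Subgroup.normalizer_eq_top_iff.2 hN₀normal]
      simp only [Subgroup.coe_top]; exact isOpen_univ
  have hrelKN : K.relIndex N₀ ≠ 0 := by
    have h1 : K.relIndex N₀ = K'.relIndex (H.subtype.range ⊓ M) := by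
      conv_lhs => rw [← Subgroup.comap_map_eq_self_of_injective H.subtype_injective K]
      rw [Subgroup.relIndex_comap, Subgroup.map_comap_eq]
    rw [h1, Subgroup.range_subtype]
    intro hz
    have := Subgroup.relIndex_mul_relIndex K' (H ⊓ M) M (le_inf hK'le hKM) inf_le_right
    rw [hz, zero_mul] at this
    exact hrel this.symm
  rcases hKN.lt_or_eq with hlt | heq
  · exact absurd (hKiso N₀ hN₀orb hlt) hrelKN
  · rw [heq]; exact hN₀normal
end

section
/- Let G be a profinite group satisfying the maximum condition on closed subgroups. Then the following are equivalent: (i) every isolated orbital closed subgroup of G is normal in G; (ii) every orbital closed subgroup K of G contains a closed subgroup N of finite index in K such that N is normal in G. -/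
namespace OrbitalProofAux

open scoped Pointwise

variable {G : Type*} [Group G]

private lemma conj_map_prod (c : G) (u : List G) :
    (u.map fun y => c⁻¹ * y * c).prod = c⁻¹ * u.prod * c := by
  induction u with
  | nil => simp
  | cons a u ih => simp only [List.map_cons, List.prod_cons, ih]; group

private lemma gather [DecidableEq G] (X : Set G) (hconj : ∀ g x, x ∈ X → g * x * g⁻¹ ∈ X) (x : G) :
    ∀ (n : ℕ) (l : List G), (∀ y ∈ l, y ∈ X) → n ≤ l.count x →
      ∃ t : List G, (∀ y ∈ t, y ∈ X) ∧ t.length + n = l.length ∧ l.prod = x ^ n * t.prod := by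
  intro n
  induction n with
  | zero => intro l hl _; exact ⟨l, hl, by simp, by simp⟩
  | succ n ih =>
    intro l hl hcount
    have hx_mem : x ∈ l := by
      by_contra h
      rw [List.count_eq_zero_of_not_mem h] at hcount
      omega
    obtain ⟨u, v, rfl⟩ := List.append_of_mem hx_mem
    set f : G → G := fun y => x⁻¹ * y * x with hf
    have hfx : f x = x := by simp [hf]
    have hfinj : Function.Injective f := by
      intro a b hab
      simp only [hf] at hab
      exact mul_left_cancel (mul_right_cancel hab)
    have hprod : (u ++ x :: v).prod = x * ((u.map f) ++ v).prod := by
      simp only [List.prod_append, List.prod_cons, hf, conj_map_prod x u]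
      group
    have hmem : ∀ y ∈ (u.map f) ++ v, y ∈ X := by
      intro y hy
      rcases List.mem_append.mp hy with hy | hy
      · obtain ⟨z, hz, rfl⟩ := List.mem_map.mp hy
        have := hconj x⁻¹ z (hl z (by simp [hz]))
        simpa [hf] using this
      · exact hl y (by simp [hy])
    have hcount' : n ≤ ((u.map f) ++ v).count x := by
      have h1 : (u.map f).count x = u.count x := by
        conv_lhs => rw [← hfx]
        exact List.count_map_of_injective u f hfinj x
      have h2 : (u ++ x :: v).count x = u.count x + 1 + v.count x := by
        simp [List.count_append, List.count_cons, add_comm, add_assoc, add_left_comm]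
      rw [List.count_append, h1]
      rw [h2] at hcount
      omega
    obtain ⟨t, ht, hlen, hp⟩ := ih ((u.map f) ++ v) hmem hcount'
    refine ⟨t, ht, ?_, ?_⟩
    · simp only [List.length_append, List.length_map, List.length_cons] at hlen ⊢
      omega
    · rw [hprod, hp, pow_succ', mul_assoc]

private lemma exists_short [DecidableEq G] (X : Set G) (hX : X.Finite)
    (hconj : ∀ g x, x ∈ X → g * x * g⁻¹ ∈ X) (htor : ∀ x ∈ X, IsOfFinOrder x) :
    ∀ l : List G, (∀ y ∈ l, y ∈ X) →
      ∃ t : List G, (∀ y ∈ t, y ∈ X) ∧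
        t.length ≤ (∑ x ∈ hX.toFinset, (orderOf x - 1)) ∧ t.prod = l.prod := by
  set B := ∑ x ∈ hX.toFinset, (orderOf x - 1) with hB
  suffices h : ∀ (n : ℕ) (l : List G), l.length ≤ n → (∀ y ∈ l, y ∈ X) →
      ∃ t : List G, (∀ y ∈ t, y ∈ X) ∧ t.length ≤ B ∧ t.prod = l.prod by
    intro l hl
    exact h l.length l le_rfl hl
  intro n
  induction n with
  | zero =>
    intro l hlen hl
    exact ⟨l, hl, hlen.trans (Nat.zero_le B), rfl⟩
  | succ n ih =>
    intro l hlen hl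
    by_cases hBl : l.length ≤ B
    · exact ⟨l, hl, hBl, rfl⟩
    push_neg at hBl
    have hpig : ∃ x ∈ X, orderOf x ≤ l.count x := by
      by_contra h
      push_neg at h
      have h1 : l.length = ∑ y ∈ l.toFinset, l.count y := by
        have := Multiset.toFinset_sum_count_eq (l : Multiset G)
        simpa using this.symm
      have h2 : l.toFinset ⊆ hX.toFinset := by
        intro y hy
        simp only [List.mem_toFinset] at hy
        simp only [Set.Finite.mem_toFinset]
        exact hl y hy
      have h3 : l.length ≤ ∑ y ∈ hX.toFinset, l.count y := by
        rw [h1]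
        exact Finset.sum_le_sum_of_subset h2
      have h4 : ∑ y ∈ hX.toFinset, l.count y ≤ B := by
        apply Finset.sum_le_sum
        intro y hy
        have hyX : y ∈ X := (Set.Finite.mem_toFinset hX).mp hy
        have := h y hyX
        omega
      omega
    obtain ⟨x, hxX, hcount⟩ := hpig
    have hpos : 0 < orderOf x := (htor x hxX).orderOf_pos
    obtain ⟨t, ht, hlen', hprod⟩ := gather X hconj x (orderOf x) l hl hcount
    obtain ⟨t', ht', hlen'', hprod'⟩ := ih t (by omega) ht
    refine ⟨t', ht', hlen'', ?_⟩
    rw [hprod', hprod, pow_orderOf_eq_one, one_mul]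

private lemma list_prod_mem_pow (S : Set G) :
    ∀ l : List G, (∀ y ∈ l, y ∈ S) → l.prod ∈ S ^ l.length := by
  intro l
  induction l with
  | nil => intro _; simp [Set.mem_one]
  | cons a l ih =>
    intro h
    rw [List.prod_cons, List.length_cons, pow_succ']
    exact Set.mul_mem_mul (h a (by simp)) (ih fun y hy => h y (by simp [hy]))

private lemma set_pow_finite {S : Set G} (hS : S.Finite) : ∀ n : ℕ, (S ^ n).Finite
  | 0 => by rw [pow_zero]; exact Set.finite_one
  | n + 1 => by rw [pow_succ]; exact (set_pow_finite hS n).mul hS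

/-- **Dietzmann's lemma**: a finite conjugation-closed set of torsion elements generates
a finite subgroup. -/
lemma dietzmann (X : Set G) (hX : X.Finite)
    (hconj : ∀ g x, x ∈ X → g * x * g⁻¹ ∈ X)
    (htor : ∀ x ∈ X, IsOfFinOrder x) :
    ((Subgroup.closure X : Subgroup G) : Set G).Finite := by
  classical
  set Y : Set G := X ∪ X⁻¹ with hY
  have hYfin : Y.Finite := hX.union hX.inv
  have hYconj : ∀ g x, x ∈ Y → g * x * g⁻¹ ∈ Y := by
    rintro g x (hx | hx)
    · exact Or.inl (hconj g x hx)
    · refine Or.inr ?_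
      rw [Set.mem_inv] at hx ⊢
      have := hconj g x⁻¹ hx
      simpa [mul_assoc] using this
  have hYtor : ∀ x ∈ Y, IsOfFinOrder x := by
    rintro x (hx | hx)
    · exact htor x hx
    · rw [Set.mem_inv] at hx
      simpa using (htor x⁻¹ hx).inv
  set B := ∑ x ∈ hYfin.toFinset, (orderOf x - 1) with hB
  have hsub : ((Subgroup.closure X : Subgroup G) : Set G) ⊆ (insert 1 Y) ^ B := by
    intro g hg
    have hg' : g ∈ Submonoid.closure Y := by
      rw [hY, ← Subgroup.closure_toSubmonoid X]
      exact hg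
    obtain ⟨l, hl, rfl⟩ := Submonoid.exists_list_of_mem_closure hg'
    obtain ⟨t, htY, htlen, htprod⟩ := exists_short Y hYfin hYconj hYtor l hl
    rw [← htprod]
    set l2 : List G := t ++ List.replicate (B - t.length) 1 with hl2
    have hpad : l2.prod = t.prod := by simp [hl2]
    have hlen : l2.length = B := by
      simp only [hl2, List.length_append, List.length_replicate]
      omega
    have hmem2 : l2.prod ∈ (insert 1 Y) ^ l2.length := by
      apply list_prod_mem_pow
      intro y hy
      rcases List.mem_append.mp hy with hy | hy
      · exact Set.mem_insert_of_mem 1 (htY y hy)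
      · rw [List.eq_of_mem_replicate hy]
        exact Set.mem_insert 1 Y
    rw [hlen, hpad] at hmem2
    exact hmem2
  exact ((set_pow_finite (hYfin.insert 1) B).subset hsub)




lemma mem_conj_smul_iff {K : Subgroup G} {g x : G} :
    x ∈ MulAut.conj g • K ↔ g⁻¹ * x * g ∈ K := by
  rw [Subgroup.mem_pointwise_smul_iff_inv_smul_mem]
  simp [MulAut.smul_def]

lemma conj_smul_conj_smul (g h : G) (K : Subgroup G) :
    MulAut.conj g • (MulAut.conj h • K) = MulAut.conj (g * h) • K := by
  rw [map_mul, mul_smul]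

lemma conj_one_smul (K : Subgroup G) : MulAut.conj (1 : G) • K = K := by
  rw [map_one, one_smul]

lemma conj_smul_eq_comap (g : G) (K : Subgroup G) :
    MulAut.conj g • K = K.comap (MulAut.conj g⁻¹).toMonoidHom := by
  ext x
  rw [mem_conj_smul_iff]
  simp [Subgroup.mem_comap]

lemma relIndex_conj_smul (K M : Subgroup G) (g : G) :
    (MulAut.conj g • K).relIndex (MulAut.conj g • M) = K.relIndex M := by
  rw [conj_smul_eq_comap g K, Subgroup.relIndex_comap]
  congr 1
  ext x
  simp only [Subgroup.mem_map, MulEquiv.coe_toMonoidHom]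
  constructor
  · rintro ⟨y, hy, rfl⟩
    rw [mem_conj_smul_iff] at hy
    simpa [mul_assoc] using hy
  · intro hx
    refine ⟨g * x * g⁻¹, ?_, by simp [mul_assoc]⟩
    rw [mem_conj_smul_iff]
    simpa [mul_assoc] using hx

lemma conj_smul_of_mem_normalizer {K : Subgroup G} {n : G} (hn : n ∈ Subgroup.normalizer (K : Set G)) :
    MulAut.conj n • K = K := by
  ext x
  rw [mem_conj_smul_iff]
  have h := Subgroup.mem_normalizer_iff''.mp hn x
  exact h.symm

lemma normalCore_eq_sInf (K : Subgroup G) :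
    K.normalCore = sInf (Set.range fun g : G => MulAut.conj g • K) := by
  ext x
  constructor
  · intro hx
    rw [Subgroup.mem_sInf]
    rintro L ⟨g, rfl⟩
    rw [mem_conj_smul_iff]
    have : ∀ b : G, b * x * b⁻¹ ∈ K := hx
    simpa [mul_assoc] using this g⁻¹
  · intro hx
    rw [Subgroup.mem_sInf] at hx
    intro b
    have := hx _ ⟨b⁻¹, rfl⟩
    rw [mem_conj_smul_iff] at this
    simpa [mul_assoc] using this

lemma relIndex_sInf_ne_zero {M : Subgroup G} {F : Set (Subgroup G)} (hF : F.Finite) :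
    (∀ L ∈ F, L.relIndex M ≠ 0) → (sInf F).relIndex M ≠ 0 := by
  refine Set.Finite.induction_on (motive := fun F _ => (∀ L ∈ F, L.relIndex M ≠ 0) → (sInf F).relIndex M ≠ 0) F hF ?_ ?_
  · intro _
    rw [sInf_empty, Subgroup.relIndex_top_left]
    exact one_ne_zero
  · intro L F' _ _ ih h
    rw [sInf_insert]
    exact Subgroup.relIndex_inf_ne_zero (h L (Set.mem_insert L F'))
      (ih fun L' hL' => h L' (Set.mem_insert_of_mem _ hL'))

variable [TopologicalSpace G] [IsTopologicalGroup G]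

lemma isClosed_conj_smul {K : Subgroup G} (hK : IsClosed (K : Set G)) (g : G) :
    IsClosed ((MulAut.conj g • K : Subgroup G) : Set G) := by
  have h : ((MulAut.conj g • K : Subgroup G) : Set G) = (fun x => g⁻¹ * x * g) ⁻¹' K := by
    ext x
    exact mem_conj_smul_iff (K := K) (g := g) (x := x)
  rw [h]
  exact hK.preimage (by fun_prop)

lemma finite_conjugates [CompactSpace G] (K : Subgroup G)
    (h : IsOpen (Subgroup.normalizer (K : Set G) : Set G)) :
    (Set.range fun g : G => MulAut.conj g • K).Finite := by
  have hfin : Finite (G ⧸ Subgroup.normalizer (K : Set G)) := Subgroup.quotient_finite_of_isOpen _ h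
  have hlift : ∀ a b : G, (QuotientGroup.leftRel (Subgroup.normalizer (K : Set G))) a b →
      MulAut.conj a • K = MulAut.conj b • K := by
    intro a b hab
    rw [QuotientGroup.leftRel_apply] at hab
    have : b = a * (a⁻¹ * b) := by group
    rw [this, ← conj_smul_conj_smul, conj_smul_of_mem_normalizer hab]
  let f : G ⧸ Subgroup.normalizer (K : Set G) → Subgroup G := Quotient.lift (fun g => MulAut.conj g • K) hlift
  have heq : (Set.range fun g : G => MulAut.conj g • K) = Set.range f := by
    ext L
    constructor
    · rintro ⟨g, rfl⟩
      exact ⟨QuotientGroup.mk g, rfl⟩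
    · rintro ⟨q, rfl⟩
      obtain ⟨g, rfl⟩ := QuotientGroup.mk_surjective q
      exact ⟨g, rfl⟩
  rw [heq]
  exact Set.finite_range f


variable [TopologicalSpace G] [IsTopologicalGroup G] [CompactSpace G]
theorem forward (hmax : MaxClosedSubgroups G)
    (hi : ∀ H : Subgroup G, IsIsolatedOrbital H → H.Normal)
    (K : Subgroup G) (hK : IsOrbital K) :
    ∃ N : Subgroup G, IsClosed (N : Set G) ∧ N ≤ K ∧ N.relIndex K ≠ 0 ∧ N.Normal := by
  obtain ⟨M, hMS, hMmax⟩ := hmax {L | IsOrbital L ∧ K ≤ L ∧ K.relIndex L ≠ 0}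
    ⟨K, hK, le_rfl, by rw [Subgroup.relIndex_self]; exact one_ne_zero⟩
    (fun L hL => hL.1.1)
  obtain ⟨hMorb, hKM, hKMrel⟩ := hMS
  have hMiso : IsIsolatedOrbital M := by
    refine ⟨hMorb, fun L' hL' hlt => ?_⟩
    by_contra hrel
    have hL'S : L' ∈ {L : Subgroup G | IsOrbital L ∧ K ≤ L ∧ K.relIndex L ≠ 0} := by
      refine ⟨hL', hKM.trans hlt.le, ?_⟩
      rw [← Subgroup.relIndex_mul_relIndex K M L' hKM hlt.le]
      exact mul_ne_zero hKMrel hrel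
    exact hlt.ne' (hMmax L' hL'S hlt.le)
  have hMnormal : M.Normal := hi M hMiso
  haveI := hMnormal
  refine ⟨K.normalCore, Subgroup.normalCore_isClosed K hK.1, K.normalCore_le, ?_,
    K.normalCore_normal⟩
  have hconj : ∀ L ∈ (Set.range fun g : G => MulAut.conj g • K), L.relIndex M ≠ 0 := by
    rintro L ⟨g, rfl⟩
    have h2 : MulAut.conj g • M = M := Subgroup.Normal.conj_smul_eq_self g M
    have key : (MulAut.conj g • K).relIndex M ≠ 0 := by
      conv_lhs => rw [← h2]
      rw [relIndex_conj_smul]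
      exact hKMrel
    simpa using key
  have hcore : K.normalCore.relIndex M ≠ 0 := by
    rw [normalCore_eq_sInf]
    exact relIndex_sInf_ne_zero (finite_conjugates K hK.2) hconj
  intro h0
  apply hcore
  rw [← Subgroup.relIndex_mul_relIndex K.normalCore K M K.normalCore_le hKM, h0, zero_mul]

theorem backward
    (hii : ∀ K : Subgroup G, IsOrbital K → ∃ N : Subgroup G,
      IsClosed (N : Set G) ∧ N ≤ K ∧ N.relIndex K ≠ 0 ∧ N.Normal)
    (H : Subgroup G) (hiso : IsIsolatedOrbital H) : H.Normal := by
  obtain ⟨hHorb, hHiso⟩ := hiso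
  obtain ⟨N, hNclosed, hNH, hNrel, hNnormal⟩ := hii H hHorb
  haveI := hNnormal
  set π : G →* G ⧸ N := QuotientGroup.mk' N with hπ
  have hπsurj : Function.Surjective π := QuotientGroup.mk'_surjective N
  have hker : π.ker = N := QuotientGroup.ker_mk' N
  set 𝒞 : Set (Subgroup G) := Set.range fun g : G => MulAut.conj g • H with h𝒞
  have h𝒞fin : 𝒞.Finite := finite_conjugates H hHorb.2
  have himg : ∀ L ∈ 𝒞, Nat.card (L.map π) ≠ 0 := by
    rintro L ⟨g, rfl⟩
    have h2 : MulAut.conj g • N = N := Subgroup.Normal.conj_smul_eq_self g N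
    have h1 : N.relIndex (MulAut.conj g • H) = N.relIndex H := by
      conv_lhs => rw [← h2]
      rw [relIndex_conj_smul]
    have key : Nat.card (Subgroup.map π (MulAut.conj g • H)) ≠ 0 := by
      rw [← Subgroup.relIndex_ker (MulAut.conj g • H) π, hker, h1]
      exact hNrel
    simpa using key
  set X : Set (G ⧸ N) := ⋃ L ∈ 𝒞, ((L.map π : Subgroup (G ⧸ N)) : Set (G ⧸ N)) with hX
  have hXfin : X.Finite := by
    refine h𝒞fin.biUnion ?_
    intro L hL
    have hfin : Finite (L.map π) := (Nat.card_ne_zero.mp (himg L hL)).2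
    exact Set.toFinite _
  have hXconj : ∀ q x, x ∈ X → q * x * q⁻¹ ∈ X := by
    intro q x hx
    obtain ⟨g, rfl⟩ := hπsurj q
    simp only [hX, Set.mem_iUnion, exists_prop] at hx ⊢
    obtain ⟨L, hL, hxL⟩ := hx
    obtain ⟨y, hyL, rfl⟩ := hxL
    obtain ⟨a, rfl⟩ := hL
    refine ⟨MulAut.conj (g * a) • H, ⟨g * a, rfl⟩, ?_⟩
    have heq : π g * π y * (π g)⁻¹ = π (g * y * g⁻¹) := by
      simp [map_mul, map_inv]
    rw [heq]
    refine ⟨g * y * g⁻¹, ?_, rfl⟩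
    rw [← conj_smul_conj_smul]
    have := Subgroup.smul_mem_pointwise_smul y (MulAut.conj g) _ hyL
    rw [MulAut.smul_def, MulAut.conj_apply] at this
    exact this
  have hXtor : ∀ x ∈ X, IsOfFinOrder x := by
    intro x hx
    simp only [hX, Set.mem_iUnion, exists_prop] at hx
    obtain ⟨L, hL, hxL⟩ := hx
    haveI hfin : Finite (L.map π) := (Nat.card_ne_zero.mp (himg L hL)).2
    have hsub : (Submonoid.powers x : Set (G ⧸ N)) ⊆ ((L.map π : Subgroup (G ⧸ N)) : Set (G ⧸ N)) := by
      rintro z ⟨n, rfl⟩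
      exact pow_mem hxL n
    exact finite_powers.mp ((Set.toFinite _).subset hsub)
  set J : Subgroup (G ⧸ N) := Subgroup.closure X with hJ
  have hJfin : (J : Set (G ⧸ N)).Finite := dietzmann X hXfin hXconj hXtor
  have hJnormal : J.Normal := by
    constructor
    intro x hx q
    induction hx using Subgroup.closure_induction with
    | mem y hy => exact Subgroup.subset_closure (hXconj q y hy)
    | one => simpa using J.one_mem
    | mul a b ha hb iha ihb =>
      have heq : q * (a * b) * q⁻¹ = (q * a * q⁻¹) * (q * b * q⁻¹) := by group
      rw [heq]; exact mul_mem iha ihb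
    | inv a ha iha =>
      have heq : q * a⁻¹ * q⁻¹ = (q * a * q⁻¹)⁻¹ := by group
      rw [heq]; exact inv_mem iha
  set M : Subgroup G := J.comap π with hM
  have hMnormal : M.Normal := hJnormal.comap π
  have hHM : H ≤ M := by
    intro h hh
    refine Subgroup.subset_closure ?_
    simp only [hX, Set.mem_iUnion, exists_prop]
    exact ⟨H, ⟨1, conj_one_smul H⟩, ⟨h, hh, rfl⟩⟩
  have hMclosed : IsClosed (M : Set G) := by
    have hcover : (M : Set G) = ⋃ q ∈ (J : Set (G ⧸ N)), π ⁻¹' {q} := by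
      ext y
      simp [hM, Subgroup.mem_comap]
    rw [hcover]
    refine hJfin.isClosed_biUnion ?_
    intro q _
    obtain ⟨y, rfl⟩ := hπsurj q
    have hpre : π ⁻¹' {π y} = (fun z => y⁻¹ * z) ⁻¹' (N : Set G) := by
      ext z
      simp only [Set.mem_preimage, Set.mem_singleton_iff, SetLike.mem_coe]
      constructor
      · intro h
        have h' : (y : G ⧸ N) = (z : G ⧸ N) := h.symm
        exact QuotientGroup.eq.mp h'
      · intro h
        exact ((QuotientGroup.eq (s := N)).mpr h).symm
    rw [hpre]
    exact hNclosed.preimage (by fun_prop)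
  have hNM_rel : N.relIndex M ≠ 0 := by
    rw [← hker, Subgroup.relIndex_ker M π]
    have hle : M.map π ≤ J := Subgroup.map_comap_le π J
    have hfin : Finite (M.map π) :=
      Set.finite_coe_iff.mpr (hJfin.subset hle)
    exact Nat.card_ne_zero.mpr ⟨⟨1⟩, hfin⟩
  have hHM_rel : H.relIndex M ≠ 0 := by
    intro h0
    apply hNM_rel
    rw [← Subgroup.relIndex_mul_relIndex N H M hNH hHM, h0, mul_zero]
  have hMorb : IsOrbital M := by
    refine ⟨hMclosed, ?_⟩
    rw [Subgroup.normalizer_eq_top_iff.mpr hMnormal]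
    simp only [Subgroup.coe_top]
    exact isOpen_univ
  rcases eq_or_lt_of_le hHM with heq | hlt
  · rw [heq]; exact hMnormal
  · exact absurd (hHiso M hMorb hlt) hHM_rel

end OrbitalProofAux

/-- For a profinite group `G` satisfying the maximum condition on closed subgroups, the
following are equivalent: (i) every isolated orbital closed subgroup of `G` is normal;
(ii) every orbital closed subgroup `K` of `G` contains a closed subgroup `N` of finite
index in `K` which is normal in `G`. -/
theorem orbitallySound_iff_orbital_contains_normal {G : Type*} [Group G]
    [TopologicalSpace G] [IsTopologicalGroup G] [CompactSpace G] [T2Space G]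
    [TotallyDisconnectedSpace G]
    (hmax : MaxClosedSubgroups G) :
    (∀ H : Subgroup G, IsIsolatedOrbital H → H.Normal) ↔
    (∀ K : Subgroup G, IsOrbital K → ∃ N : Subgroup G,
      IsClosed (N : Set G) ∧ N ≤ K ∧ N.relIndex K ≠ 0 ∧ N.Normal) := by
  constructor
  · intro hi K hK
    exact OrbitalProofAux.forward hmax hi K hK
  · intro hii H hiso
    exact OrbitalProofAux.backward hii H hiso
end

section
/- Let p be a prime and A a free ℤ_p-module of finite rank. Let φ : A → A be a ℤ_p-linear automorphism of finite order (φ^m = id for some m ≥ 1) with the property that every ℤ_p-submodule K of A contains a ℤ_p-submodule K' with φ(K') = K' and K/K' finite. Then there exists a unit ζ ∈ ℤ_p^× of finite order (a torsion unit, so ζ^(p−1) = 1 if p > 2, and ζ = ±1 if p = 2) such that φ(x) = ζ·x for all x ∈ A. -/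
private theorem padic_assoc_aux {p : ℕ} [Fact p.Prime] {c d : ℤ_[p]} (hc : c ≠ 0) {m : ℕ}
    (hm : 1 ≤ m) (h : c ^ m = d ^ m) : ∃ u : ℤ_[p]ˣ, d = c * (u : ℤ_[p]) := by
  have hm0 : m ≠ 0 := by omega
  have hd : d ≠ 0 := by
    intro h0
    rw [h0, zero_pow hm0] at h
    exact hc (pow_eq_zero_iff hm0 |>.mp h)
  have hn : ‖c‖ = ‖d‖ := by
    have := congrArg norm h
    rw [norm_pow, norm_pow] at this
    exact (pow_left_inj₀ (norm_nonneg _) (norm_nonneg _) hm0).mp this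
  have hp1 : (1 : ℝ) < p := by exact_mod_cast (Fact.out : p.Prime).one_lt
  have hv : c.valuation = d.valuation := by
    rw [PadicInt.norm_eq_zpow_neg_valuation hc, PadicInt.norm_eq_zpow_neg_valuation hd] at hn
    exact Nat.cast_injective (neg_injective (zpow_right_injective₀ (by linarith) (by linarith) hn))
  obtain ⟨u, hcu⟩ : ∃ u : ℤ_[p]ˣ, c = ↑u * (p : ℤ_[p]) ^ c.valuation :=
    ⟨_, PadicInt.unitCoeff_spec hc⟩
  obtain ⟨w, hdu⟩ : ∃ w : ℤ_[p]ˣ, d = ↑w * (p : ℤ_[p]) ^ d.valuation :=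
    ⟨_, PadicInt.unitCoeff_spec hd⟩
  refine ⟨u⁻¹ * w, ?_⟩
  rw [hdu, hcu, hv, Units.val_mul]
  have huu : (u : ℤ_[p]) * (u⁻¹ : ℤ_[p]ˣ) = 1 := Units.mul_inv u
  calc (w : ℤ_[p]) * (p : ℤ_[p]) ^ d.valuation
      = ((u : ℤ_[p]) * (u⁻¹ : ℤ_[p]ˣ)) * ((w : ℤ_[p]) * (p : ℤ_[p]) ^ d.valuation) := by
        rw [huu, one_mul]
    _ = ↑u * (p : ℤ_[p]) ^ d.valuation * ((u⁻¹ : ℤ_[p]ˣ) * ↑w) := by ring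

private theorem eigen_aux {p : ℕ} [Fact p.Prime] {A : Type*} [AddCommGroup A] [Module ℤ_[p] A]
    [Module.Free ℤ_[p] A]
    (φ : A ≃ₗ[ℤ_[p]] A) {m : ℕ} (hm : 1 ≤ m) (hord : φ ^ m = 1)
    (horb : ∀ K : Submodule ℤ_[p] A, ∃ K' : Submodule ℤ_[p] A, K' ≤ K ∧
      K'.map (φ : A →ₗ[ℤ_[p]] A) = K' ∧ Finite (K ⧸ K'.comap K.subtype))
    {x : A} (hx : x ≠ 0) :
    ∃ a : ℤ_[p], a ^ m = 1 ∧ φ x = a • x := by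
  obtain ⟨K', hle, hinv, hfin⟩ := horb (Submodule.span ℤ_[p] {x})
  have hinjx : Function.Injective fun c : ℤ_[p] => c • x := smul_left_injective ℤ_[p] hx
  -- K' ≠ ⊥
  have hKbot : K' ≠ ⊥ := by
    rintro rfl
    rw [Submodule.comap_bot, Submodule.ker_subtype] at hfin
    have hInf : Infinite (Submodule.span ℤ_[p] {x}) :=
      Infinite.of_injective
        (fun c : ℤ_[p] =>
          (⟨c • x, Submodule.smul_mem _ c (Submodule.mem_span_singleton_self x)⟩ :
            Submodule.span ℤ_[p] {x}))
        (fun a b hab => hinjx (congrArg Subtype.val hab))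
    have : Infinite ((Submodule.span ℤ_[p] {x}) ⧸
        (⊥ : Submodule ℤ_[p] (Submodule.span ℤ_[p] {x}))) :=
      Infinite.of_injective _ (Submodule.quotEquivOfEqBot ⊥ rfl).symm.injective
    exact @not_finite _ this hfin
  obtain ⟨y, hy, hy0⟩ := Submodule.exists_mem_ne_zero_of_ne_bot hKbot
  -- orbit stays in K'
  have hmemK' : ∀ j : ℕ, (φ ^ j) y ∈ K' := by
    intro j
    induction j with
    | zero => simpa using hy
    | succ n ih =>
      have h1 : (φ : A →ₗ[ℤ_[p]] A) ((φ ^ n) y) ∈ K'.map (φ : A →ₗ[ℤ_[p]] A) :=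
        Submodule.mem_map_of_mem ih
      rw [hinv] at h1
      have h2 : (φ ^ (n + 1)) y = φ ((φ ^ n) y) := by
        rw [pow_succ']; rfl
      rw [h2]; exact h1
  have hspan : ∀ j : ℕ, ∃ cj : ℤ_[p], (φ ^ j) y = cj • x := fun j =>
    ((Submodule.mem_span_singleton.mp (hle (hmemK' j))).imp fun _ ha => ha.symm)
  choose cs hcs using hspan
  have hc0 : cs 0 ≠ 0 := by
    intro h0
    apply hy0
    have : (φ ^ 0) y = y := rfl
    rw [← this, hcs 0, h0, zero_smul]
  -- recurrence
  have hrec : ∀ j : ℕ, cs (j + 1) • x = cs j • φ x := by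
    intro j
    rw [← hcs (j + 1)]
    have h2 : (φ ^ (j + 1)) y = φ ((φ ^ j) y) := by rw [pow_succ']; rfl
    rw [h2, hcs j, map_smul]
  have e1 : cs 1 • x = cs 0 • φ x := hrec 0
  have hstep : ∀ j : ℕ, cs 0 * cs (j + 1) = cs j * cs 1 := by
    intro j
    apply hinjx
    show (cs 0 * cs (j + 1)) • x = (cs j * cs 1) • x
    rw [mul_smul, mul_smul, hrec j, e1]
    exact smul_comm _ _ _
  have hkey : ∀ j : ℕ, cs j * cs 0 ^ j = cs 0 * cs 1 ^ j := by
    intro j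
    induction j with
    | zero => simp
    | succ n ih =>
      calc cs (n + 1) * cs 0 ^ (n + 1) = (cs 0 * cs (n + 1)) * cs 0 ^ n := by ring
        _ = (cs n * cs 1) * cs 0 ^ n := by rw [hstep n]
        _ = cs 1 * (cs n * cs 0 ^ n) := by ring
        _ = cs 1 * (cs 0 * cs 1 ^ n) := by rw [ih]
        _ = cs 0 * cs 1 ^ (n + 1) := by ring
  have hcm : cs m = cs 0 := by
    apply hinjx
    show cs m • x = cs 0 • x
    rw [← hcs m, ← hcs 0, hord]
    rfl
  have hpow : cs 0 ^ m = cs 1 ^ m := by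
    have := hkey m
    rw [hcm] at this
    exact mul_left_cancel₀ hc0 this
  obtain ⟨u, hu⟩ := padic_assoc_aux hc0 hm hpow
  refine ⟨(u : ℤ_[p]), ?_, ?_⟩
  · have h1 : cs 0 ^ m * 1 = cs 0 ^ m * (u : ℤ_[p]) ^ m := by
      rw [mul_one, ← mul_pow, ← hu, hpow]
    exact (mul_left_cancel₀ (pow_ne_zero m hc0) h1).symm
  · have h1 : cs 0 • φ x = cs 0 • ((u : ℤ_[p]) • x) := by
      rw [← e1, hu, mul_smul]
    exact smul_right_injective A hc0 h1

/-- Let `A` be a free `ℤ_p`-module of finite rank and `φ` a `ℤ_p`-linear automorphism of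
finite order such that every submodule `K` of `A` contains a `φ`-invariant submodule `K'`
with `K/K'` finite. Then `φ` is multiplication by a torsion unit `ζ ∈ ℤ_p^×`. -/
theorem finite_order_orbitally_sound_action_is_scalar (p : ℕ) [Fact p.Prime]
    {A : Type*} [AddCommGroup A] [Module ℤ_[p] A]
    [Module.Free ℤ_[p] A] [Module.Finite ℤ_[p] A]
    (φ : A ≃ₗ[ℤ_[p]] A) (m : ℕ) (hm : 1 ≤ m) (hord : φ ^ m = 1)
    (horb : ∀ K : Submodule ℤ_[p] A, ∃ K' : Submodule ℤ_[p] A, K' ≤ K ∧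
      K'.map (φ : A →ₗ[ℤ_[p]] A) = K' ∧ Finite (K ⧸ K'.comap K.subtype)) :
    ∃ ζ : ℤ_[p]ˣ, IsOfFinOrder ζ ∧ ∀ x : A, φ x = (ζ : ℤ_[p]) • x := by
  by_cases hA : ∀ x : A, x = 0
  · refine ⟨1, IsOfFinOrder.one, fun x => ?_⟩
    rw [hA x, map_zero, smul_zero]
  · push_neg at hA
    obtain ⟨x₀, hx₀⟩ := hA
    obtain ⟨a, ham, hax⟩ := eigen_aux φ hm hord horb hx₀
    have haunit : IsUnit a := by
      apply IsUnit.of_mul_eq_one (a ^ (m - 1))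
      rw [← pow_succ']
      have : m - 1 + 1 = m := by omega
      rw [this, ham]
    refine ⟨haunit.unit, ?_, ?_⟩
    · refine isOfFinOrder_iff_pow_eq_one.mpr ⟨m, by omega, ?_⟩
      ext
      rw [Units.val_pow_eq_pow_val, haunit.unit_spec, ham, Units.val_one]
    · intro x
      rw [haunit.unit_spec]
      rcases eq_or_ne x 0 with rfl | hx
      · rw [map_zero, smul_zero]
      obtain ⟨b, hbm, hbx⟩ := eigen_aux φ hm hord horb hx
      suffices hba : b = a by rw [hbx, hba]
      -- uniqueness of eigenvalue
      by_cases hxy : x + x₀ = 0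
      · have hneg : x = -x₀ := eq_neg_of_add_eq_zero_left hxy
        have : b • x = a • x := by
          rw [← hbx, hneg, map_neg, hax, smul_neg]
        exact smul_left_injective ℤ_[p] hx this
      · obtain ⟨c, _, hcx⟩ := eigen_aux φ hm hord horb hxy
        have h1 : c • x + c • x₀ = b • x + a • x₀ := by
          rw [← smul_add, ← hcx, map_add, hbx, hax]
        have h2 : (b - c) • x = (c - a) • x₀ := by
          rw [sub_smul, sub_smul, sub_eq_sub_iff_add_eq_add, add_comm (c • x₀)]
          exact h1.symm
        by_cases hbc : b = c
        · have h3 : (c - a) • x₀ = 0 := by rw [← h2, hbc, sub_self, zero_smul]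
          have h4 : c - a = 0 := by
            rcases smul_eq_zero.mp h3 with h | h
            · exact h
            · exact absurd h hx₀
          exact hbc.trans (sub_eq_zero.mp h4)
        · have h3 : φ ((b - c) • x) = φ ((c - a) • x₀) := congrArg φ h2
          rw [map_smul, map_smul, hbx, hax] at h3
          have h4 : ((b - c) * b) • x = ((b - c) * a) • x := by
            rw [mul_smul, mul_smul]
            calc (b - c) • b • x = a • (c - a) • x₀ := by rw [h3, smul_comm]
              _ = a • (b - c) • x := by rw [← h2]
              _ = (b - c) • a • x := smul_comm _ _ _
          have h5 : (b - c) * b = (b - c) * a := smul_left_injective ℤ_[p] hx h4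
          exact mul_left_cancel₀ (sub_ne_zero.mpr hbc) h5
end

section
/- Let p be a prime, G a profinite group, and H an open normal subgroup of G such that: (a) for every h ∈ H and every open subgroup U of H there exists n ≥ 0 with h^(p^n) ∈ U; and (b) for all g, h ∈ H and all n ≥ 0, g^(p^n) = h^(p^n) implies g = h. Suppose moreover that the FC-centre Δ(G) is contained in H. Then the centre of H equals the FC-centre of G: Z(H) = Δ(G). -/
/-- Let `G` be a profinite group and `H` an open normal subgroup such that
(a) every element of `H` has `p`-power torsion modulo every open subgroup of `H`, and
(b) `H` has unique `p`-power roots. If the FC-centre `Δ(G)` (the set of elements with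
finite-index centralizer) is contained in `H`, then the centre of `H` equals `Δ(G)`. -/
theorem centre_eq_fc_centre {p : ℕ} (hp : p.Prime) {G : Type*} [Group G]
    [TopologicalSpace G] [IsTopologicalGroup G] [CompactSpace G] [T2Space G]
    [TotallyDisconnectedSpace G]
    (H : Subgroup G) [H.Normal] (hHopen : IsOpen (H : Set G))
    (ha : ∀ h : H, ∀ U : Subgroup H, IsOpen (U : Set H) → ∃ n : ℕ, h ^ p ^ n ∈ U)
    (hb : ∀ g h : H, ∀ n : ℕ, g ^ p ^ n = h ^ p ^ n → g = h)
    (hΔ : ∀ x : G, (Subgroup.centralizer {x}).index ≠ 0 → x ∈ H) :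
    ((Subgroup.center H).map H.subtype : Set G) =
      {x : G | (Subgroup.centralizer {x}).index ≠ 0} := by
  have hHfin : Finite (G ⧸ H) := Subgroup.quotient_finite_of_isOpen H hHopen
  have hHindex : H.index ≠ 0 := Subgroup.index_ne_zero_of_finite
  ext x
  simp only [Set.mem_setOf_eq, SetLike.mem_coe, Subgroup.mem_map]
  constructor
  · rintro ⟨z, hz, rfl⟩
    -- H is contained in the centralizer of z
    have hle : H ≤ Subgroup.centralizer {(H.subtype z : G)} := by
      intro g hg
      rw [Subgroup.mem_centralizer_singleton_iff]
      have := (Subgroup.mem_center_iff.mp hz) ⟨g, hg⟩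
      exact congrArg Subtype.val this
    intro h0
    exact hHindex (Nat.eq_zero_of_zero_dvd (h0 ▸ Subgroup.index_dvd_of_le hle))
  · intro hx
    have hxH : x ∈ H := hΔ x hx
    set C := Subgroup.centralizer {x} with hC
    haveI : C.FiniteIndex := ⟨hx⟩
    have hCclosed : IsClosed (C : Set G) := by
      have : (C : Set G) = {g : G | g * x = x * g} := by
        ext g
        simp [hC, Subgroup.mem_centralizer_singleton_iff]
      rw [this]
      exact isClosed_eq (continuous_id.mul continuous_const)
        (continuous_const.mul continuous_id)
    have hCopen : IsOpen (C : Set G) :=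
      Subgroup.isOpen_of_isClosed_of_finiteIndex C hCclosed
    -- the centralizer intersected with H, as a subgroup of H
    set U : Subgroup H := C.subgroupOf H with hU
    have hUopen : IsOpen (U : Set H) := by
      have : (U : Set H) = (Subtype.val : H → G) ⁻¹' (C : Set G) := rfl
      rw [this]
      exact hCopen.preimage continuous_subtype_val
    refine ⟨⟨x, hxH⟩, Subgroup.mem_center_iff.mpr fun h => ?_, rfl⟩
    obtain ⟨n, hn⟩ := ha h U hUopen
    have hcomm : (h : G) ^ p ^ n * x = x * (h : G) ^ p ^ n := by
      have h1 : ((h ^ p ^ n : H) : G) ∈ C := hn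
      rw [hC, Subgroup.mem_centralizer_singleton_iff] at h1
      simpa using h1
    have hkH : x * (h : G) * x⁻¹ ∈ H := ‹H.Normal›.conj_mem _ h.2 x
    have hk : (⟨x * (h : G) * x⁻¹, hkH⟩ : H) ^ p ^ n = h ^ p ^ n := by
      apply Subtype.ext
      push_cast
      rw [conj_pow, ← hcomm, mul_inv_cancel_right]
    have := hb _ _ n hk
    have hxh : x * (h : G) * x⁻¹ = (h : G) := congrArg Subtype.val this
    apply Subtype.ext
    show (h : G) * x = x * (h : G)
    exact (mul_inv_eq_iff_eq_mul.mp hxh).symm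
end
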